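/- arXiv:2604.24097 — 4 statements merged into one kernel-verified Lean document; each statement's English description precedes it below -/
import Mathlib

section
/- Let p be an odd prime and let G = H(p,e,i,j,k) with generators a, b. A map θ defined on the generators extends to an inner automorphism of G if and only if θ(a) = a·c_a and θ(b) = b·c_b for some c_a, c_b ∈ G′ (the commutator subgroup); moreover every such choice of c_a, c_b ∈ G′ yields an inner automorphism. -/
open Subgroup Equiv

namespace Beauville

variable {G : Type*} [Group G]

/-- `𝕋(G)`: generating triples with product 1. -/
def TripleSet (G : Type*) [Group G] : Set (G × G × G) :=
  {t | Subgroup.closure {t.1, t.2.1} = ⊤ ∧ t.1 * t.2.1 * t.2.2 = 1}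

lemma mem_tripleSet {x y z : G} :
    (x, y, z) ∈ TripleSet G ↔ Subgroup.closure {x, y} = ⊤ ∧ x * y * z = 1 := Iff.rfl

lemma closure_pair_top_of {x y u v : G} (h : Subgroup.closure {x, y} = ⊤)
    (hx : x ∈ Subgroup.closure {u, v}) (hy : y ∈ Subgroup.closure {u, v}) :
    Subgroup.closure ({u, v} : Set G) = ⊤ := by
  rw [eq_top_iff, ← h, Subgroup.closure_le]
  intro g hg
  simp only [Set.mem_insert_iff, Set.mem_singleton_iff] at hg
  rcases hg with rfl | rfl
  · exact hx
  · exact hy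

lemma mem_cp_left (u v : G) : u ∈ Subgroup.closure ({u, v} : Set G) :=
  Subgroup.subset_closure (Set.mem_insert _ _)

lemma mem_cp_right (u v : G) : v ∈ Subgroup.closure ({u, v} : Set G) :=
  Subgroup.subset_closure (Set.mem_insert_of_mem _ rfl)

lemma closure_pair_map_top (f : G ≃* G) {x y : G} (h : Subgroup.closure {x, y} = ⊤) :
    Subgroup.closure ({f x, f y} : Set G) = ⊤ := by
  have himg : ({f x, f y} : Set G) = f.toMonoidHom '' {x, y} := (Set.image_pair _ _ _).symm
  rw [himg, ← MonoidHom.map_closure, h, ← MonoidHom.range_eq_map]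
  simpa [MonoidHom.range_eq_top] using f.surjective

section Perms

/-- raw permutation `σ₁ : (x,y,z) ↦ (y,z,x)`. -/
def rotRaw : Equiv.Perm (G × G × G) where
  toFun t := (t.2.1, t.2.2, t.1)
  invFun t := (t.2.2, t.1, t.2.1)
  left_inv _ := rfl
  right_inv _ := rfl

@[simp] lemma rotRaw_apply (t : G × G × G) : rotRaw t = (t.2.1, t.2.2, t.1) := rfl

lemma rotRaw_mem {t : G × G × G} (ht : t ∈ TripleSet G) : rotRaw t ∈ TripleSet G := by
  obtain ⟨x, y, z⟩ := t
  rw [mem_tripleSet] at ht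
  obtain ⟨hc, hp⟩ := ht
  rw [rotRaw_apply]
  have hx : x = (y * z)⁻¹ := by
    rw [mul_assoc] at hp
    exact eq_inv_of_mul_eq_one_left hp
  refine mem_tripleSet.2 ⟨closure_pair_top_of hc ?_ ?_, ?_⟩
  · rw [hx]
    exact inv_mem (mul_mem (mem_cp_left _ _) (mem_cp_right _ _))
  · exact mem_cp_left _ _
  · rw [hx, mul_inv_cancel]

lemma rotRaw_iff (t : G × G × G) : t ∈ TripleSet G ↔ rotRaw t ∈ TripleSet G :=
  ⟨fun h => rotRaw_mem h, fun h => by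
    have h2 := rotRaw_mem (rotRaw_mem h)
    rwa [show rotRaw (rotRaw (rotRaw t)) = t by simp] at h2⟩

/-- `σ₁` as a permutation of `𝕋(G)`. -/
def sigma1T (G : Type*) [Group G] : Equiv.Perm (TripleSet G) :=
  rotRaw.subtypePerm (fun t => (rotRaw_iff t).symm)

/-- `σ₂ = σ₁ ∘ σ₁`, acting as `(x,y,z) ↦ (z,x,y)`. -/
def sigma2T (G : Type*) [Group G] : Equiv.Perm (TripleSet G) :=
  sigma1T G * sigma1T G

/-- raw permutation `σ₃ : (x,y,z) ↦ (z,y,x^y)`. -/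
def sigma3Raw : Equiv.Perm (G × G × G) where
  toFun t := (t.2.2, t.2.1, t.2.1⁻¹ * t.1 * t.2.1)
  invFun t := (t.2.1 * t.2.2 * t.2.1⁻¹, t.2.1, t.1)
  left_inv := by rintro ⟨x, y, z⟩; simp [mul_assoc]
  right_inv := by rintro ⟨x, y, z⟩; simp [mul_assoc]

@[simp] lemma sigma3Raw_apply (t : G × G × G) :
    sigma3Raw t = (t.2.2, t.2.1, t.2.1⁻¹ * t.1 * t.2.1) := rfl

@[simp] lemma sigma3Raw_symm_apply (t : G × G × G) :
    sigma3Raw.symm t = (t.2.1 * t.2.2 * t.2.1⁻¹, t.2.1, t.1) := rfl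

lemma sigma3Raw_mem {t : G × G × G} (ht : t ∈ TripleSet G) : sigma3Raw t ∈ TripleSet G := by
  obtain ⟨x, y, z⟩ := t
  rw [mem_tripleSet] at ht
  obtain ⟨hc, hp⟩ := ht
  have hz : z = (x * y)⁻¹ := eq_inv_of_mul_eq_one_right hp
  rw [sigma3Raw_apply]
  refine mem_tripleSet.2 ⟨closure_pair_top_of hc ?_ ?_, ?_⟩
  · have hxe : x = z⁻¹ * y⁻¹ := by rw [hz]; group
    rw [hxe]
    exact mul_mem (inv_mem (mem_cp_left _ _)) (inv_mem (mem_cp_right _ _))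
  · exact mem_cp_right _ _
  · rw [hz]; group

lemma sigma3Raw_symm_mem {t : G × G × G} (ht : t ∈ TripleSet G) :
    sigma3Raw.symm t ∈ TripleSet G := by
  obtain ⟨x, y, z⟩ := t
  rw [mem_tripleSet] at ht
  obtain ⟨hc, hp⟩ := ht
  have hz : z = (x * y)⁻¹ := eq_inv_of_mul_eq_one_right hp
  rw [sigma3Raw_symm_apply]
  refine mem_tripleSet.2 ⟨closure_pair_top_of hc ?_ ?_, ?_⟩
  · have hxe : x = y⁻¹ * (y * z * y⁻¹)⁻¹ := by rw [hz]; group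
    rw [hxe]
    exact mul_mem (inv_mem (mem_cp_right _ _)) (inv_mem (mem_cp_left _ _))
  · exact mem_cp_right _ _
  · rw [hz]; group

lemma sigma3Raw_iff (t : G × G × G) : t ∈ TripleSet G ↔ sigma3Raw t ∈ TripleSet G :=
  ⟨fun h => sigma3Raw_mem h, fun h => by
    have h2 := sigma3Raw_symm_mem h
    rwa [Equiv.symm_apply_apply] at h2⟩

/-- `σ₃` as a permutation of `𝕋(G)`. -/
def sigma3T (G : Type*) [Group G] : Equiv.Perm (TripleSet G) :=
  sigma3Raw.subtypePerm (fun t => (sigma3Raw_iff t).symm)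

/-- raw permutation `σ₄ : (x,y,z) ↦ (y,x,z^x)`. -/
def sigma4Raw : Equiv.Perm (G × G × G) where
  toFun t := (t.2.1, t.1, t.1⁻¹ * t.2.2 * t.1)
  invFun t := (t.2.1, t.1, t.2.1 * t.2.2 * t.2.1⁻¹)
  left_inv := by rintro ⟨x, y, z⟩; simp [mul_assoc]
  right_inv := by rintro ⟨x, y, z⟩; simp [mul_assoc]

@[simp] lemma sigma4Raw_apply (t : G × G × G) :
    sigma4Raw t = (t.2.1, t.1, t.1⁻¹ * t.2.2 * t.1) := rfl

@[simp] lemma sigma4Raw_symm_apply (t : G × G × G) :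
    sigma4Raw.symm t = (t.2.1, t.1, t.2.1 * t.2.2 * t.2.1⁻¹) := rfl

lemma sigma4Raw_mem {t : G × G × G} (ht : t ∈ TripleSet G) : sigma4Raw t ∈ TripleSet G := by
  obtain ⟨x, y, z⟩ := t
  rw [mem_tripleSet] at ht
  obtain ⟨hc, hp⟩ := ht
  have hz : z = (x * y)⁻¹ := eq_inv_of_mul_eq_one_right hp
  rw [sigma4Raw_apply]
  refine mem_tripleSet.2 ⟨closure_pair_top_of hc ?_ ?_, ?_⟩
  · exact mem_cp_right _ _
  · exact mem_cp_left _ _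
  · rw [hz]; group

lemma sigma4Raw_symm_mem {t : G × G × G} (ht : t ∈ TripleSet G) :
    sigma4Raw.symm t ∈ TripleSet G := by
  obtain ⟨x, y, z⟩ := t
  rw [mem_tripleSet] at ht
  obtain ⟨hc, hp⟩ := ht
  have hz : z = (x * y)⁻¹ := eq_inv_of_mul_eq_one_right hp
  rw [sigma4Raw_symm_apply]
  refine mem_tripleSet.2 ⟨closure_pair_top_of hc ?_ ?_, ?_⟩
  · exact mem_cp_right _ _
  · exact mem_cp_left _ _
  · rw [hz]; group

lemma sigma4Raw_iff (t : G × G × G) : t ∈ TripleSet G ↔ sigma4Raw t ∈ TripleSet G :=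
  ⟨fun h => sigma4Raw_mem h, fun h => by
    have h2 := sigma4Raw_symm_mem h
    rwa [Equiv.symm_apply_apply] at h2⟩

/-- `σ₄` as a permutation of `𝕋(G)`. -/
def sigma4T (G : Type*) [Group G] : Equiv.Perm (TripleSet G) :=
  sigma4Raw.subtypePerm (fun t => (sigma4Raw_iff t).symm)

/-- raw permutation `σ₅ : (x,y,z) ↦ (x,z,y^z)`. -/
def sigma5Raw : Equiv.Perm (G × G × G) where
  toFun t := (t.1, t.2.2, t.2.2⁻¹ * t.2.1 * t.2.2)
  invFun t := (t.1, t.2.1 * t.2.2 * t.2.1⁻¹, t.2.1)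
  left_inv := by rintro ⟨x, y, z⟩; simp [mul_assoc]
  right_inv := by rintro ⟨x, y, z⟩; simp [mul_assoc]

@[simp] lemma sigma5Raw_apply (t : G × G × G) :
    sigma5Raw t = (t.1, t.2.2, t.2.2⁻¹ * t.2.1 * t.2.2) := rfl

@[simp] lemma sigma5Raw_symm_apply (t : G × G × G) :
    sigma5Raw.symm t = (t.1, t.2.1 * t.2.2 * t.2.1⁻¹, t.2.1) := rfl

lemma sigma5Raw_mem {t : G × G × G} (ht : t ∈ TripleSet G) : sigma5Raw t ∈ TripleSet G := by
  obtain ⟨x, y, z⟩ := t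
  rw [mem_tripleSet] at ht
  obtain ⟨hc, hp⟩ := ht
  have hz : z = (x * y)⁻¹ := eq_inv_of_mul_eq_one_right hp
  rw [sigma5Raw_apply]
  refine mem_tripleSet.2 ⟨closure_pair_top_of hc ?_ ?_, ?_⟩
  · exact mem_cp_left _ _
  · have hye : y = x⁻¹ * z⁻¹ := by rw [hz]; group
    rw [hye]
    exact mul_mem (inv_mem (mem_cp_left _ _)) (inv_mem (mem_cp_right _ _))
  · rw [hz]; group

lemma sigma5Raw_symm_mem {t : G × G × G} (ht : t ∈ TripleSet G) :
    sigma5Raw.symm t ∈ TripleSet G := by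
  obtain ⟨x, y, z⟩ := t
  rw [mem_tripleSet] at ht
  obtain ⟨hc, hp⟩ := ht
  have hz : z = (x * y)⁻¹ := eq_inv_of_mul_eq_one_right hp
  rw [sigma5Raw_symm_apply]
  refine mem_tripleSet.2 ⟨closure_pair_top_of hc ?_ ?_, ?_⟩
  · exact mem_cp_left _ _
  · have hv : y * z * y⁻¹ = x⁻¹ * y⁻¹ := by rw [hz]; group
    rw [hv]
    have h2 : (x * (x⁻¹ * y⁻¹))⁻¹ ∈ Subgroup.closure ({x, x⁻¹ * y⁻¹} : Set G) :=
      inv_mem (mul_mem (mem_cp_left _ _) (mem_cp_right _ _))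
    simpa using h2
  · rw [hz]; group

lemma sigma5Raw_iff (t : G × G × G) : t ∈ TripleSet G ↔ sigma5Raw t ∈ TripleSet G :=
  ⟨fun h => sigma5Raw_mem h, fun h => by
    have h2 := sigma5Raw_symm_mem h
    rwa [Equiv.symm_apply_apply] at h2⟩

/-- `σ₅` as a permutation of `𝕋(G)`. -/
def sigma5T (G : Type*) [Group G] : Equiv.Perm (TripleSet G) :=
  sigma5Raw.subtypePerm (fun t => (sigma5Raw_iff t).symm)

end Perms


/-- Evaluation of a word in two letters at a pair of group elements. -/
def wordEval (w : FreeGroup Bool) (x y : G) : G :=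
  FreeGroup.lift (fun b => bif b then x else y) w

lemma wordEval_conj (w : FreeGroup Bool) (x y c : G) :
    wordEval w (c⁻¹ * x * c) (c⁻¹ * y * c) = c⁻¹ * wordEval w x y * c := by
  have key : FreeGroup.lift (fun b => bif b then c⁻¹ * x * c else c⁻¹ * y * c) =
      ((MulAut.conj c⁻¹).toMonoidHom.comp (FreeGroup.lift (fun b => bif b then x else y))) := by
    apply FreeGroup.ext_hom
    intro b
    cases b <;> simp [MulAut.conj_apply, mul_assoc]
  unfold wordEval
  rw [key]
  simp [MulAut.conj_apply, mul_assoc]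

/-- Conjugation of a triple by a group element (`t^c`). -/
def conjTriple (c : G) (t : G × G × G) : G × G × G :=
  (c⁻¹ * t.1 * c, c⁻¹ * t.2.1 * c, c⁻¹ * t.2.2 * c)

lemma conjTriple_conjTriple (c d : G) (t : G × G × G) :
    conjTriple d (conjTriple c t) = conjTriple (c * d) t := by
  simp [conjTriple, mul_assoc]

@[simp] lemma conjTriple_one (t : G × G × G) : conjTriple 1 t = t := by
  simp [conjTriple]

lemma conjTriple_mem (c : G) {t : G × G × G} (ht : t ∈ TripleSet G) :
    conjTriple c t ∈ TripleSet G := by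
  obtain ⟨x, y, z⟩ := t
  rw [mem_tripleSet] at ht
  obtain ⟨hc, hp⟩ := ht
  refine mem_tripleSet.2 ⟨?_, ?_⟩
  · have h1 : (c⁻¹ * x * c : G) = (MulAut.conj c⁻¹ : G ≃* G) x := by
      simp [MulAut.conj_apply]
    have h2 : (c⁻¹ * y * c : G) = (MulAut.conj c⁻¹ : G ≃* G) y := by
      simp [MulAut.conj_apply]
    rw [h1, h2]
    exact closure_pair_map_top _ hc
  · have : c⁻¹ * x * c * (c⁻¹ * y * c) * (c⁻¹ * z * c) = c⁻¹ * (x * y * z) * c := by group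
    rw [this, hp]
    group

/-- The raw permutation `β_w : t ↦ t^{w(x,y)}`. -/
def betaRaw (w : FreeGroup Bool) : Equiv.Perm (G × G × G) where
  toFun t := conjTriple (wordEval w t.1 t.2.1) t
  invFun t := conjTriple (wordEval w t.1 t.2.1)⁻¹ t
  left_inv := by
    rintro ⟨x, y, z⟩
    have h1 : wordEval w (conjTriple (wordEval w x y) (x, y, z)).1
        (conjTriple (wordEval w x y) (x, y, z)).2.1 = wordEval w x y := by
      show wordEval w ((wordEval w x y)⁻¹ * x * wordEval w x y)
          ((wordEval w x y)⁻¹ * y * wordEval w x y) = _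
      rw [wordEval_conj]
      group
    show conjTriple _ (conjTriple (wordEval w x y) (x, y, z)) = (x, y, z)
    rw [h1, conjTriple_conjTriple, mul_inv_cancel, conjTriple_one]
  right_inv := by
    rintro ⟨x, y, z⟩
    have h1 : wordEval w (conjTriple (wordEval w x y)⁻¹ (x, y, z)).1
        (conjTriple (wordEval w x y)⁻¹ (x, y, z)).2.1 = wordEval w x y := by
      show wordEval w ((wordEval w x y)⁻¹⁻¹ * x * (wordEval w x y)⁻¹)
          ((wordEval w x y)⁻¹⁻¹ * y * (wordEval w x y)⁻¹) = _
      rw [wordEval_conj]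
      group
    show conjTriple _ (conjTriple (wordEval w x y)⁻¹ (x, y, z)) = (x, y, z)
    rw [h1, conjTriple_conjTriple, inv_mul_cancel, conjTriple_one]

lemma betaRaw_iff (w : FreeGroup Bool) (t : G × G × G) :
    t ∈ TripleSet G ↔ betaRaw w t ∈ TripleSet G := by
  constructor
  · intro h
    exact conjTriple_mem _ h
  · intro h
    have h2 : (betaRaw w).symm (betaRaw w t) ∈ TripleSet G := conjTriple_mem _ h
    rwa [Equiv.symm_apply_apply] at h2

/-- `β_w` as a permutation of `𝕋(G)`. -/
def betaT (G : Type*) [Group G] (w : FreeGroup Bool) : Equiv.Perm (TripleSet G) :=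
  (betaRaw w).subtypePerm (fun t => (betaRaw_iff w t).symm)

/-- The raw diagonal action of an automorphism on triples. -/
def autRaw (α : MulAut G) : Equiv.Perm (G × G × G) :=
  Equiv.prodCongr (α : G ≃* G).toEquiv
    (Equiv.prodCongr (α : G ≃* G).toEquiv (α : G ≃* G).toEquiv)

@[simp] lemma autRaw_apply (α : MulAut G) (t : G × G × G) :
    autRaw α t = (α t.1, α t.2.1, α t.2.2) := rfl

lemma autRaw_mem (α : MulAut G) {t : G × G × G} (ht : t ∈ TripleSet G) :
    autRaw α t ∈ TripleSet G := by
  obtain ⟨x, y, z⟩ := t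
  rw [mem_tripleSet] at ht
  obtain ⟨hc, hp⟩ := ht
  rw [autRaw_apply]
  refine mem_tripleSet.2 ⟨closure_pair_map_top (α : G ≃* G) hc, ?_⟩
  rw [← map_mul, ← map_mul, hp, map_one]

lemma autRaw_symm_apply (α : MulAut G) (t : G × G × G) :
    (autRaw α).symm t = autRaw α⁻¹ t := rfl

lemma autRaw_iff (α : MulAut G) (t : G × G × G) :
    t ∈ TripleSet G ↔ autRaw α t ∈ TripleSet G := by
  constructor
  · exact fun h => autRaw_mem α h
  · intro h
    have h2 := autRaw_mem α⁻¹ h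
    rw [← autRaw_symm_apply, Equiv.symm_apply_apply] at h2
    exact h2

/-- `α̃`, the diagonal action of an automorphism on `𝕋(G)`. -/
def dAutT (α : MulAut G) : Equiv.Perm (TripleSet G) :=
  (autRaw α).subtypePerm (fun t => (autRaw_iff α t).symm)

/-- `ι̃_g`, the diagonal action of the inner automorphism `ι_g` on `𝕋(G)`. -/
def dInnT (g : G) : Equiv.Perm (TripleSet G) :=
  dAutT (MulAut.conj g)

/-- `J(G) = {β_w : w a word in two letters}`. -/
def JSet (G : Type*) [Group G] : Set (Equiv.Perm (TripleSet G)) :=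
  Set.range (betaT G)

/-- The subgroup `⟨σ₁, σ₄⟩` of `Sym(𝕋(G))`. -/
def SS14 (G : Type*) [Group G] : Subgroup (Equiv.Perm (TripleSet G)) :=
  Subgroup.closure {sigma1T G, sigma4T G}

/-- `I(G) = ⟨DInn(G), σ₁, σ₂, σ₃, σ₄, σ₅⟩`. -/
def IGroup (G : Type*) [Group G] : Subgroup (Equiv.Perm (TripleSet G)) :=
  Subgroup.closure (Set.range (dInnT (G := G)) ∪
    {sigma1T G, sigma2T G, sigma3T G, sigma4T G, sigma5T G})


/-- `Σ(x,y)`: the union of all conjugates of `⟨x⟩`, `⟨y⟩` and `⟨x*y⟩`. -/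
def sigmaSet (x y : G) : Set G :=
  ⋃ g : G, (fun h => g * h * g⁻¹) ''
    ((Subgroup.zpowers x : Set G) ∪ (Subgroup.zpowers y : Set G) ∪
      (Subgroup.zpowers (x * y) : Set G))

/-- An (unmixed) Beauville structure for `G`. -/
def IsBeauvilleStructure (t : (G × G × G) × (G × G × G)) : Prop :=
  ∃ x₁ y₁ x₂ y₂ : G,
    t = ((x₁, y₁, (x₁ * y₁)⁻¹), (x₂, y₂, (x₂ * y₂)⁻¹)) ∧
    Subgroup.closure {x₁, y₁} = ⊤ ∧ Subgroup.closure {x₂, y₂} = ⊤ ∧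
    sigmaSet x₁ y₁ ∩ sigmaSet x₂ y₂ = {1}

/-- `𝕌(G)`, the set of all Beauville structures for `G`, as a subset of `G³ × G³`. -/
def beauvilleStructures (G : Type*) [Group G] : Set ((G × G × G) × (G × G × G)) :=
  {t | IsBeauvilleStructure t}

/-- A Beauville group is a group admitting a Beauville structure. -/
def IsBeauvilleGroup (G : Type*) [Group G] : Prop :=
  ∃ t : (G × G × G) × (G × G × G), IsBeauvilleStructure t

/-- A metacyclic group: it has a cyclic normal subgroup with cyclic quotient. -/
def IsMetacyclic (G : Type*) [Group G] : Prop :=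
  ∃ (N : Subgroup G) (hN : N.Normal), IsCyclic N ∧
    (haveI := hN; IsCyclic (G ⧸ N))

/-- `𝕌(G)` viewed as a subset of `𝕋(G) × 𝕋(G)`. -/
def USet (G : Type*) [Group G] : Set (TripleSet G × TripleSet G) :=
  {t | IsBeauvilleStructure ((t.1 : G × G × G), (t.2 : G × G × G))}

/-- Generators of `B(G)`: the permutations of `𝕌(G)` induced by the componentwise action
of `I(G) × I(G)` and by the diagonal action of `Aut(G)`. -/
def BGens (G : Type*) [Group G] : Set (Equiv.Perm (USet G)) :=
  {π | ∃ ρ₁ ∈ IGroup G, ∃ ρ₂ ∈ IGroup G,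
      ∀ t : USet G, ((π t : TripleSet G × TripleSet G)) = (ρ₁ (t : TripleSet G × TripleSet G).1, ρ₂ (t : TripleSet G × TripleSet G).2)} ∪
  {π | ∃ α : MulAut G,
      ∀ t : USet G, ((π t : TripleSet G × TripleSet G)) = (dAutT α (t : TripleSet G × TripleSet G).1, dAutT α (t : TripleSet G × TripleSet G).2)}

/-- The permutation(s) of `𝕌(G)` exchanging the two triples. -/
def tauGens (G : Type*) [Group G] : Set (Equiv.Perm (USet G)) :=
  {π | ∀ t : USet G, ((π t : TripleSet G × TripleSet G)) =
      ((t : TripleSet G × TripleSet G).2, (t : TripleSet G × TripleSet G).1)}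

/-- `B(G)`, the subgroup of `Sym(𝕌(G))` generated by the action of `I(G) × I(G)`
and the diagonal action of `Aut(G)`. -/
def BGroup (G : Type*) [Group G] : Subgroup (Equiv.Perm (USet G)) :=
  Subgroup.closure (BGens G)

/-- `A_𝕌(G) = ⟨B(G), τ⟩`. -/
def AUGroup (G : Type*) [Group G] : Subgroup (Equiv.Perm (USet G)) :=
  Subgroup.closure (BGens G ∪ tauGens G)


/-- The subgroup of `G` generated by all `n`-th powers. -/
def powSubgroup (G : Type*) [Group G] (n : ℕ) : Subgroup G :=
  Subgroup.closure (Set.range fun g : G => g ^ n)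

/-- The subgroup of inner automorphisms, `Inn(G)`. -/
def innAut (G : Type*) [Group G] : Subgroup (MulAut G) :=
  (MulAut.conj : G →* MulAut G).range

instance innAut_normal (G : Type*) [Group G] : (innAut G).Normal := by
  constructor
  rintro - ⟨g, rfl⟩ α
  refine ⟨α g, ?_⟩
  ext x
  simp only [MulAut.conj_apply, MulAut.mul_apply, MulAut.inv_def, map_mul, map_inv,
    MulEquiv.apply_symm_apply]

section Presented

open scoped commutatorElement

/-- The two generators of the free group on two letters. -/
def fA : FreeGroup Bool := FreeGroup.of true

def fB : FreeGroup Bool := FreeGroup.of false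

/-- Relations of `M(p,e,i) = ⟨a,b ∣ a^{p^e} = b^{p^e} = 1, [a,b] = a^{p^i}⟩`. -/
def MRels (p e i : ℕ) : Set (FreeGroup Bool) :=
  {fA ^ p ^ e, fB ^ p ^ e, ⁅fA, fB⁆ * (fA ^ p ^ i)⁻¹}

/-- The metacyclic group `M(p,e,i)`. -/
abbrev MGroup (p e i : ℕ) : Type := PresentedGroup (MRels p e i)

def ma (p e i : ℕ) : MGroup p e i := PresentedGroup.of true

def mb (p e i : ℕ) : MGroup p e i := PresentedGroup.of false

/-- Relations of
`H(p,e,i,j,k) = ⟨a,b ∣ a^{p^e} = [b,a]^{p^j} = [b,a,a] = [b,a,b] = 1, b^{p^i} = [b,a]^{p^k}⟩`. -/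
def HRels (p e i j k : ℕ) : Set (FreeGroup Bool) :=
  {fA ^ p ^ e, ⁅fB, fA⁆ ^ p ^ j, ⁅⁅fB, fA⁆, fA⁆, ⁅⁅fB, fA⁆, fB⁆,
    fB ^ p ^ i * (⁅fB, fA⁆ ^ p ^ k)⁻¹}

/-- The group `H(p,e,i,j,k)` of nilpotency class 2. -/
abbrev HGroup (p e i j k : ℕ) : Type := PresentedGroup (HRels p e i j k)

def ha (p e i j k : ℕ) : HGroup p e i j k := PresentedGroup.of true

def hb (p e i j k : ℕ) : HGroup p e i j k := PresentedGroup.of false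

/-- Relations of
`K(p,e,j) = ⟨a,b ∣ a^{p^e} = b^{p^e} = [b,a]^{p^j} = [b,a,b] = [b,a,a] = 1⟩`. -/
def KRels (p e j : ℕ) : Set (FreeGroup Bool) :=
  {fA ^ p ^ e, fB ^ p ^ e, ⁅fB, fA⁆ ^ p ^ j, ⁅⁅fB, fA⁆, fB⁆, ⁅⁅fB, fA⁆, fA⁆}

/-- The group `K(p,e,j)` of nilpotency class 2. -/
abbrev KGroup (p e j : ℕ) : Type := PresentedGroup (KRels p e j)

def ka (p e j : ℕ) : KGroup p e j := PresentedGroup.of true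

def kb (p e j : ℕ) : KGroup p e j := PresentedGroup.of false

end Presented


open scoped commutatorElement

section Aux8

variable {G₀ : Type*} [Group G₀]

lemma aux8_central {a b : G₀} (hab : Subgroup.closure ({a, b} : Set G₀) = ⊤)
    (h1 : Commute ⁅b, a⁆ a) (h2 : Commute ⁅b, a⁆ b) (x : G₀) : Commute ⁅b, a⁆ x := by
  have hx : x ∈ Subgroup.closure ({a, b} : Set G₀) := hab ▸ Subgroup.mem_top x
  induction hx using Subgroup.closure_induction with
  | mem y hy =>
      rcases hy with rfl | hy
      · exact h1
      · rw [Set.mem_singleton_iff] at hy; subst hy; exact h2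
  | one => exact Commute.one_right _
  | mul y z _ _ hy hz => exact hy.mul_right hz
  | inv y _ hy => exact hy.inv_right

lemma aux8_comm_le {a b : G₀} (hab : Subgroup.closure ({a, b} : Set G₀) = ⊤)
    (hcent : ∀ x : G₀, Commute ⁅b, a⁆ x) :
    commutator G₀ ≤ Subgroup.zpowers ⁅b, a⁆ := by
  set c := ⁅b, a⁆ with hc
  haveI hZn : (Subgroup.zpowers c).Normal := by
    constructor
    intro n hn g
    obtain ⟨m, rfl⟩ := Subgroup.mem_zpowers_iff.1 hn
    have hcg : Commute (c ^ m) g := (hcent g).zpow_left m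
    have : g * c ^ m * g⁻¹ = c ^ m := by rw [← hcg.eq]; group
    rw [this]
    exact Subgroup.mem_zpowers_iff.2 ⟨m, rfl⟩
  set Z := Subgroup.zpowers c with hZ
  let π := QuotientGroup.mk' Z
  have hsurj : Function.Surjective π := QuotientGroup.mk'_surjective Z
  have hgen : Subgroup.closure ({π a, π b} : Set (G₀ ⧸ Z)) = ⊤ := by
    have himg : ({π a, π b} : Set (G₀ ⧸ Z)) = π '' {a, b} := (Set.image_pair _ _ _).symm
    rw [himg, ← MonoidHom.map_closure, hab, Subgroup.map_top_of_surjective _ hsurj]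
  have hcomm_ba : Commute (π b) (π a) := by
    rw [← commutatorElement_eq_one_iff_commute, ← map_commutatorElement]
    exact (QuotientGroup.eq_one_iff _).2 (Subgroup.mem_zpowers c)
  have hca : ∀ y : G₀ ⧸ Z, Commute (π a) y := by
    intro y
    have hy : y ∈ Subgroup.closure ({π a, π b} : Set (G₀ ⧸ Z)) := hgen ▸ Subgroup.mem_top y
    induction hy using Subgroup.closure_induction with
    | mem z hz =>
        rcases hz with rfl | hz
        · exact Commute.refl _
        · rw [Set.mem_singleton_iff] at hz; subst hz; exact hcomm_ba.symm
    | one => exact Commute.one_right _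
    | mul u v _ _ hu hv => exact hu.mul_right hv
    | inv u _ hu => exact hu.inv_right
  have hcb : ∀ y : G₀ ⧸ Z, Commute (π b) y := by
    intro y
    have hy : y ∈ Subgroup.closure ({π a, π b} : Set (G₀ ⧸ Z)) := hgen ▸ Subgroup.mem_top y
    induction hy using Subgroup.closure_induction with
    | mem z hz =>
        rcases hz with rfl | hz
        · exact hcomm_ba
        · rw [Set.mem_singleton_iff] at hz; subst hz; exact Commute.refl _
    | one => exact Commute.one_right _
    | mul u v _ _ hu hv => exact hu.mul_right hv
    | inv u _ hu => exact hu.inv_right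
  have hall : ∀ x y : G₀ ⧸ Z, Commute x y := by
    intro x
    have hx : x ∈ Subgroup.closure ({π a, π b} : Set (G₀ ⧸ Z)) := hgen ▸ Subgroup.mem_top x
    induction hx using Subgroup.closure_induction with
    | mem z hz =>
        rcases hz with rfl | hz
        · exact hca
        · rw [Set.mem_singleton_iff] at hz; subst hz; exact hcb
    | one => exact fun y => Commute.one_left _
    | mul u v _ _ hu hv => exact fun y => (hu y).mul_left (hv y)
    | inv u _ hu => exact fun y => (hu y).inv_left
  rw [commutator_def, Subgroup.commutator_le]
  intro x _ y _
  have h1 : π ⁅x, y⁆ = 1 := by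
    rw [map_commutatorElement]
    exact commutatorElement_eq_one_iff_commute.2 (hall _ _)
  exact (QuotientGroup.eq_one_iff _).1 h1

lemma aux8_conj_zpow {g x c : G₀} (hcent : ∀ y : G₀, Commute c y)
    (h : g * x * g⁻¹ = x * c) (m : ℤ) : g ^ m * x * (g ^ m)⁻¹ = x * c ^ m := by
  have hdown : g⁻¹ * x * g = x * c⁻¹ := by
    have hcg : c * g = g * c := (hcent g).eq
    have h2 : x = g⁻¹ * (x * c) * g := by rw [← h]; group
    rw [show g⁻¹ * (x * c) * g = g⁻¹ * x * (c * g) by group, hcg,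
      show g⁻¹ * x * (g * c) = g⁻¹ * x * g * c by group] at h2
    exact eq_mul_inv_of_mul_eq h2.symm
  induction m using Int.induction_on with
  | zero => simp
  | succ n ih =>
      have hcg : c * (g ^ (n : ℤ))⁻¹ = (g ^ (n : ℤ))⁻¹ * c := (hcent _).eq
      have e1 : g ^ ((n : ℤ) + 1) * x * (g ^ ((n : ℤ) + 1))⁻¹
          = g ^ (n : ℤ) * (g * x * g⁻¹) * (g ^ (n : ℤ))⁻¹ := by
        rw [zpow_add_one]; group
      rw [e1, h, show g ^ (n : ℤ) * (x * c) * (g ^ (n : ℤ))⁻¹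
          = g ^ (n : ℤ) * x * (c * (g ^ (n : ℤ))⁻¹) by group, hcg,
        show g ^ (n : ℤ) * x * ((g ^ (n : ℤ))⁻¹ * c)
          = g ^ (n : ℤ) * x * (g ^ (n : ℤ))⁻¹ * c by group, ih, zpow_add_one]
      group
  | pred n ih =>
      have hcg : c⁻¹ * (g ^ (-(n : ℤ)))⁻¹ = (g ^ (-(n : ℤ)))⁻¹ * c⁻¹ := ((hcent _).inv_left).eq
      have e1 : g ^ (-(n : ℤ) - 1) * x * (g ^ (-(n : ℤ) - 1))⁻¹
          = g ^ (-(n : ℤ)) * (g⁻¹ * x * g) * (g ^ (-(n : ℤ)))⁻¹ := by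
        rw [zpow_sub_one]; group
      rw [e1, hdown, show g ^ (-(n : ℤ)) * (x * c⁻¹) * (g ^ (-(n : ℤ)))⁻¹
          = g ^ (-(n : ℤ)) * x * (c⁻¹ * (g ^ (-(n : ℤ)))⁻¹) by group, hcg,
        show g ^ (-(n : ℤ)) * x * ((g ^ (-(n : ℤ)))⁻¹ * c⁻¹)
          = g ^ (-(n : ℤ)) * x * (g ^ (-(n : ℤ)))⁻¹ * c⁻¹ by group, ih, zpow_sub_one]
      group

lemma aux8_exists {a b : G₀} (hcent : ∀ x : G₀, Commute ⁅b, a⁆ x)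
    {ca cb : G₀} (hca : ca ∈ Subgroup.zpowers ⁅b, a⁆) (hcb : cb ∈ Subgroup.zpowers ⁅b, a⁆) :
    ∃ g : G₀, g * a * g⁻¹ = a * ca ∧ g * b * g⁻¹ = b * cb := by
  set c := ⁅b, a⁆ with hc
  obtain ⟨m, rfl⟩ := Subgroup.mem_zpowers_iff.1 hca
  obtain ⟨n, rfl⟩ := Subgroup.mem_zpowers_iff.1 hcb
  have hba : b * a * b⁻¹ = a * c := by
    have h1 : c * a = b * a * b⁻¹ := by rw [hc, commutatorElement_def]; group
    rw [← h1]
    exact (hcent a).eq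
  have hab2 : a * b * a⁻¹ = b * c⁻¹ := by
    have hcb' : c * b = b * c := (hcent b).eq
    have h2 : a = b⁻¹ * (a * c) * b := by rw [← hba]; group
    rw [show b⁻¹ * (a * c) * b = b⁻¹ * a * (c * b) by group, hcb',
      show b⁻¹ * a * (b * c) = b⁻¹ * a * b * c by group] at h2
    have h3 : b⁻¹ * a * b = a * c⁻¹ := eq_mul_inv_of_mul_eq h2.symm
    have h4 : a * b = b * (a * c⁻¹) := by rw [← h3]; group
    have h5 : c⁻¹ * a⁻¹ = a⁻¹ * c⁻¹ := ((hcent a⁻¹).inv_left).eq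
    rw [h4, show b * (a * c⁻¹) * a⁻¹ = b * a * (c⁻¹ * a⁻¹) by group, h5]
    group
  refine ⟨b ^ m * a ^ (-n), ?_, ?_⟩
  · have hbm := aux8_conj_zpow hcent hba m
    have e1 : b ^ m * a ^ (-n) * a * (b ^ m * a ^ (-n))⁻¹ = b ^ m * a * (b ^ m)⁻¹ := by group
    rw [e1, hbm]
  · have hcent' : ∀ x : G₀, Commute c⁻¹ x := fun x => (hcent x).inv_left
    have h2 := aux8_conj_zpow hcent' hab2 (-n)
    have h3 : ((c⁻¹ : G₀)) ^ (-n) = c ^ n := by group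
    rw [h3] at h2
    have hc2 : c ^ n * (b ^ m)⁻¹ = (b ^ m)⁻¹ * c ^ n := ((hcent _).zpow_left n).eq
    have e1 : b ^ m * a ^ (-n) * b * (b ^ m * a ^ (-n))⁻¹
        = b ^ m * (a ^ (-n) * b * (a ^ (-n))⁻¹) * (b ^ m)⁻¹ := by group
    rw [e1, h2, show b ^ m * (b * c ^ n) * (b ^ m)⁻¹ = b ^ m * b * (c ^ n * (b ^ m)⁻¹) by group,
      hc2, show b ^ m * b * ((b ^ m)⁻¹ * c ^ n) = b ^ m * b * (b ^ m)⁻¹ * c ^ n by group]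
    group

lemma aux8_aut_eq {a b : G₀} (hab : Subgroup.closure ({a, b} : Set G₀) = ⊤)
    {θ θ' : MulAut G₀} (h1 : θ a = θ' a) (h2 : θ b = θ' b) : θ = θ' := by
  ext x
  have hx : x ∈ Subgroup.closure ({a, b} : Set G₀) := hab ▸ Subgroup.mem_top x
  induction hx using Subgroup.closure_induction with
  | mem y hy =>
      rcases hy with rfl | hy
      · exact h1
      · rw [Set.mem_singleton_iff] at hy; subst hy; exact h2
  | one => simp
  | mul y z _ _ hy hz => simp [map_mul, hy, hz]
  | inv y _ hy => simp [map_inv, hy]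

end Aux8

theorem statement8' (p e i j k : ℕ) :
    (∀ θ : MulAut (HGroup p e i j k),
      θ ∈ innAut (HGroup p e i j k) ↔
      ∃ ca ∈ commutator (HGroup p e i j k), ∃ cb ∈ commutator (HGroup p e i j k),
        θ (ha p e i j k) = ha p e i j k * ca ∧ θ (hb p e i j k) = hb p e i j k * cb) ∧
    (∀ ca ∈ commutator (HGroup p e i j k), ∀ cb ∈ commutator (HGroup p e i j k),
      ∃ θ ∈ innAut (HGroup p e i j k),
        θ (ha p e i j k) = ha p e i j k * ca ∧ θ (hb p e i j k) = hb p e i j k * cb) := by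
  have hgen : Subgroup.closure
      ({ha p e i j k, hb p e i j k} : Set (HGroup p e i j k)) = ⊤ := by
    have h := PresentedGroup.closure_range_of (HRels p e i j k)
    have hr : Set.range (PresentedGroup.of : Bool → HGroup p e i j k)
        = {ha p e i j k, hb p e i j k} := by
      ext x
      constructor
      · rintro ⟨(_ | _), rfl⟩
        · exact Set.mem_insert_of_mem _ rfl
        · exact Set.mem_insert _ _
      · intro hx
        simp only [Set.mem_insert_iff, Set.mem_singleton_iff] at hx
        rcases hx with rfl | rfl
        · exact ⟨true, rfl⟩
        · exact ⟨false, rfl⟩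
    rw [← hr]; exact h
  have hrel1 : ⁅⁅hb p e i j k, ha p e i j k⁆, ha p e i j k⁆ = 1 := by
    have hm : ⁅⁅fB, fA⁆, fA⁆ ∈ HRels p e i j k := by simp [HRels]
    have h1 : PresentedGroup.mk (HRels p e i j k) ⁅⁅fB, fA⁆, fA⁆ = 1 :=
      (QuotientGroup.eq_one_iff _).2 (Subgroup.subset_normalClosure hm)
    rw [map_commutatorElement, map_commutatorElement] at h1
    exact h1
  have hrel2 : ⁅⁅hb p e i j k, ha p e i j k⁆, hb p e i j k⁆ = 1 := by
    have hm : ⁅⁅fB, fA⁆, fB⁆ ∈ HRels p e i j k := by simp [HRels]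
    have h1 : PresentedGroup.mk (HRels p e i j k) ⁅⁅fB, fA⁆, fB⁆ = 1 :=
      (QuotientGroup.eq_one_iff _).2 (Subgroup.subset_normalClosure hm)
    rw [map_commutatorElement, map_commutatorElement] at h1
    exact h1
  have hcent : ∀ x : HGroup p e i j k, Commute ⁅hb p e i j k, ha p e i j k⁆ x :=
    aux8_central hgen (commutatorElement_eq_one_iff_commute.1 hrel1)
      (commutatorElement_eq_one_iff_commute.1 hrel2)
  have hle : commutator (HGroup p e i j k)
      ≤ Subgroup.zpowers ⁅hb p e i j k, ha p e i j k⁆ :=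
    aux8_comm_le hgen hcent
  have key : ∀ ca ∈ commutator (HGroup p e i j k), ∀ cb ∈ commutator (HGroup p e i j k),
      ∃ θ ∈ innAut (HGroup p e i j k),
        θ (ha p e i j k) = ha p e i j k * ca ∧ θ (hb p e i j k) = hb p e i j k * cb := by
    intro ca hca cb hcb
    obtain ⟨g, hga, hgb⟩ := aux8_exists hcent (hle hca) (hle hcb)
    exact ⟨MulAut.conj g, ⟨g, rfl⟩,
      by rw [MulAut.conj_apply, hga], by rw [MulAut.conj_apply, hgb]⟩
  refine ⟨fun θ => ⟨?_, ?_⟩, key⟩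
  · rintro ⟨g, rfl⟩
    refine ⟨(ha p e i j k)⁻¹ * MulAut.conj g (ha p e i j k), ?_,
      (hb p e i j k)⁻¹ * MulAut.conj g (hb p e i j k), ?_,
      (mul_inv_cancel_left _ _).symm, (mul_inv_cancel_left _ _).symm⟩
    · have he : (ha p e i j k)⁻¹ * MulAut.conj g (ha p e i j k)
          = ⁅(ha p e i j k)⁻¹, g⁆ := by
        rw [MulAut.conj_apply, commutatorElement_def]; group
      rw [he, commutator_def]
      exact Subgroup.commutator_mem_commutator (Subgroup.mem_top _) (Subgroup.mem_top _)
    · have he : (hb p e i j k)⁻¹ * MulAut.conj g (hb p e i j k)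
          = ⁅(hb p e i j k)⁻¹, g⁆ := by
        rw [MulAut.conj_apply, commutatorElement_def]; group
      rw [he, commutator_def]
      exact Subgroup.commutator_mem_commutator (Subgroup.mem_top _) (Subgroup.mem_top _)
  · rintro ⟨ca, hca, cb, hcb, hta, htb⟩
    obtain ⟨g, hga, hgb⟩ := aux8_exists hcent (hle hca) (hle hcb)
    refine ⟨g, aux8_aut_eq hgen ?_ ?_⟩
    · rw [MulAut.conj_apply, hga, hta]
    · rw [MulAut.conj_apply, hgb, htb]


section Statements

theorem statement8 (p e i j k : ℕ) (hp : p.Prime) (hodd : Odd p)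
    (hk : 0 < k) (hkj : k < j) (hji : j ≤ i) (hie : i ≤ e) (he : e = i + j - k) :
    (∀ θ : MulAut (HGroup p e i j k),
      θ ∈ innAut (HGroup p e i j k) ↔
      ∃ ca ∈ commutator (HGroup p e i j k), ∃ cb ∈ commutator (HGroup p e i j k),
        θ (ha p e i j k) = ha p e i j k * ca ∧ θ (hb p e i j k) = hb p e i j k * cb) ∧
    (∀ ca ∈ commutator (HGroup p e i j k), ∀ cb ∈ commutator (HGroup p e i j k),
      ∃ θ ∈ innAut (HGroup p e i j k),
        θ (ha p e i j k) = ha p e i j k * ca ∧ θ (hb p e i j k) = hb p e i j k * cb) := by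
  exact statement8' p e i j k

end Statements

end Beauville
end

section
/- Let p be an odd prime and let G = K(p,e,j). Then Z(G) = G^{p^j}·G′, where G^{p^j} is the subgroup generated by all p^j-th powers of elements of G and G′ is the commutator subgroup of G. Consequently, |Z(G)| = p^{2e−j}. -/
open Subgroup Equiv
open scoped commutatorElement

namespace Beauville

variable {G : Type*} [Group G]

section Statements


set_option linter.unusedSectionVars false


/-- Model for `K(p,e,j)`: Heisenberg-type group on `ZMod N × ZMod N × ZMod J`. -/
@[ext] structure Mdl (N J : ℕ) : Type where
  x : ZMod N
  y : ZMod N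
  z : ZMod J

namespace Mdl

variable (N J : ℕ) [Fact (J ∣ N)]

/-- The reduction map. -/
def pr : ZMod N →+* ZMod J := ZMod.castHom (Fact.out : J ∣ N) (ZMod J)

variable {N J}

instance : Mul (Mdl N J) :=
  ⟨fun g h => ⟨g.x + h.x, g.y + h.y, g.z + h.z + pr N J h.x * pr N J g.y⟩⟩
instance : One (Mdl N J) := ⟨⟨0, 0, 0⟩⟩
instance : Inv (Mdl N J) :=
  ⟨fun g => ⟨-g.x, -g.y, -g.z + pr N J g.x * pr N J g.y⟩⟩

@[simp] lemma mul_x (g h : Mdl N J) : (g * h).x = g.x + h.x := rfl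
@[simp] lemma mul_y (g h : Mdl N J) : (g * h).y = g.y + h.y := rfl
@[simp] lemma mul_z (g h : Mdl N J) :
    (g * h).z = g.z + h.z + pr N J h.x * pr N J g.y := rfl
@[simp] lemma one_x : (1 : Mdl N J).x = 0 := rfl
@[simp] lemma one_y : (1 : Mdl N J).y = 0 := rfl
@[simp] lemma one_z : (1 : Mdl N J).z = 0 := rfl
@[simp] lemma inv_x (g : Mdl N J) : (g⁻¹).x = -g.x := rfl
@[simp] lemma inv_y (g : Mdl N J) : (g⁻¹).y = -g.y := rfl
@[simp] lemma inv_z (g : Mdl N J) : (g⁻¹).z = -g.z + pr N J g.x * pr N J g.y := rfl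

instance : Group (Mdl N J) where
  mul_assoc a b c := by ext <;> simp <;> ring
  one_mul a := by ext <;> simp
  mul_one a := by ext <;> simp
  inv_mul_cancel a := by ext <;> simp <;> ring

lemma pow_def (g : Mdl N J) (n : ℕ) :
    g ^ n = ⟨n * g.x, n * g.y, n * g.z + (n.choose 2) * (pr N J g.x * pr N J g.y)⟩ := by
  induction n with
  | zero => ext <;> simp
  | succ n ih =>
      rw [pow_succ, ih]
      ext <;> simp [Nat.choose_succ_succ, map_natCast] <;> push_cast <;> ring

end Mdl


namespace Mdl
variable {N J : ℕ} [Fact (J ∣ N)]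

def A : Mdl N J := ⟨1, 0, 0⟩
def B : Mdl N J := ⟨0, 1, 0⟩
def C : Mdl N J := ⟨0, 0, 1⟩

@[simp] lemma pr_natCast (m : ℕ) : pr N J (m : ZMod N) = (m : ZMod J) := map_natCast _ _

lemma pr_eq_val (x : ZMod N) [NeZero N] : pr N J x = ((x.val : ℕ) : ZMod J) := by
  rw [pr, ZMod.castHom_apply, ← ZMod.natCast_val]

lemma pr_eq_zero_iff (x : ZMod N) [NeZero N] :
    pr N J x = 0 ↔ ∃ t : ZMod N, x = (J : ZMod N) * t := by
  constructor
  · intro h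
    rw [pr_eq_val, ZMod.natCast_eq_zero_iff] at h
    obtain ⟨t, ht⟩ := h
    refine ⟨(t : ZMod N), ?_⟩
    rw [← Nat.cast_mul, ← ht, ZMod.natCast_val, ZMod.cast_id]
  · rintro ⟨t, rfl⟩
    rw [map_mul, pr_natCast, ZMod.natCast_self, zero_mul]

lemma comm_BA : ⁅(B : Mdl N J), (A : Mdl N J)⁆ = C := by
  show B * A * B⁻¹ * A⁻¹ = C
  ext <;> simp [A, B, C]

lemma pow_A (m : ℕ) : (A : Mdl N J) ^ m = ⟨(m : ZMod N), 0, 0⟩ := by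
  rw [pow_def]; ext <;> simp [A]

lemma pow_B (m : ℕ) : (B : Mdl N J) ^ m = ⟨0, (m : ZMod N), 0⟩ := by
  rw [pow_def]; ext <;> simp [B]

lemma pow_C (m : ℕ) : (C : Mdl N J) ^ m = ⟨0, 0, (m : ZMod J)⟩ := by
  rw [pow_def]; ext <;> simp [C]

lemma C_central (g : Mdl N J) : Commute C g := by
  ext <;> simp [C] <;> ring

lemma mem_center_iff' (g : Mdl N J) :
    g ∈ Subgroup.center (Mdl N J) ↔ pr N J g.x = 0 ∧ pr N J g.y = 0 := by
  rw [Subgroup.mem_center_iff]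
  constructor
  · intro h
    constructor
    · have := congrArg Mdl.z (h B)
      simpa [B] using this.symm
    · have := congrArg Mdl.z (h A)
      simpa [A] using this
  · rintro ⟨hx, hy⟩ k
    ext <;> simp [hx, hy] <;> ring

end Mdl


namespace Mdl
variable {N J : ℕ} [Fact (J ∣ N)] [NeZero N] [NeZero J]

lemma C_mem_commutator : (C : Mdl N J) ∈ commutator (Mdl N J) := by
  rw [_root_.commutator_def, ← comm_BA]
  exact Subgroup.commutator_mem_commutator (Subgroup.mem_top _) (Subgroup.mem_top _)

lemma sup_eq_center :
    powSubgroup (Mdl N J) J ⊔ commutator (Mdl N J) = Subgroup.center (Mdl N J) := by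
  apply le_antisymm
  · apply sup_le
    · rw [powSubgroup, Subgroup.closure_le]
      rintro - ⟨g, rfl⟩
      rw [SetLike.mem_coe]
      show g ^ J ∈ Subgroup.center (Mdl N J)
      rw [mem_center_iff', pow_def]
      constructor <;> simp
    · rw [_root_.commutator_def, Subgroup.commutator_le]
      intro g _ h _
      rw [mem_center_iff']
      have hx : (g * h * g⁻¹ * h⁻¹).x = 0 := by
        simp only [mul_x, inv_x]; ring
      have hy : (g * h * g⁻¹ * h⁻¹).y = 0 := by
        simp only [mul_y, inv_y]; ring
      show pr N J (g * h * g⁻¹ * h⁻¹).x = 0 ∧ pr N J (g * h * g⁻¹ * h⁻¹).y = 0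
      rw [hx, hy, map_zero]
      exact ⟨rfl, rfl⟩
  · intro g hg
    rw [mem_center_iff'] at hg
    obtain ⟨t, ht⟩ := (pr_eq_zero_iff g.x).1 hg.1
    obtain ⟨s, hs⟩ := (pr_eq_zero_iff g.y).1 hg.2
    have hdecomp : g = (A ^ t.val) ^ J * (B ^ s.val) ^ J * C ^ g.z.val := by
      rw [← pow_mul, ← pow_mul, pow_A, pow_B, pow_C]
      ext
      · show g.x = ((t.val * J : ℕ) : ZMod N) + 0 + 0
        rw [ht]; push_cast; rw [ZMod.natCast_val, ZMod.cast_id]; ring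
      · show g.y = (0 + ((s.val * J : ℕ) : ZMod N) + 0)
        rw [hs]; push_cast; rw [ZMod.natCast_val, ZMod.cast_id]; ring
      · show g.z = _
        simp [ZMod.natCast_val, ZMod.cast_id]
    rw [hdecomp]
    refine mul_mem (mul_mem ?_ ?_) (Subgroup.mem_sup_right (pow_mem C_mem_commutator _))
    · exact Subgroup.mem_sup_left (Subgroup.subset_closure ⟨A ^ t.val, rfl⟩)
    · exact Subgroup.mem_sup_left (Subgroup.subset_closure ⟨B ^ s.val, rfl⟩)

/-- The abelianization-type hom recording the two outer coordinates mod `J`. -/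
def outerHom : Mdl N J →* Multiplicative (ZMod J × ZMod J) where
  toFun g := Multiplicative.ofAdd (pr N J g.x, pr N J g.y)
  map_one' := by simp
  map_mul' g h := by
    simp only [mul_x, mul_y, map_add]
    rfl

lemma outerHom_surjective : Function.Surjective (outerHom (N := N) (J := J)) := by
  intro u
  refine ⟨⟨((u.toAdd.1.val : ℕ) : ZMod N), ((u.toAdd.2.val : ℕ) : ZMod N), 0⟩, ?_⟩
  show Multiplicative.ofAdd (_, _) = u
  simp [ZMod.natCast_val, ZMod.cast_id]

lemma ker_outerHom : (outerHom (N := N) (J := J)).ker = Subgroup.center (Mdl N J) := by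
  ext g
  rw [MonoidHom.mem_ker, mem_center_iff']
  constructor
  · intro h
    have := congrArg Multiplicative.toAdd h
    exact ⟨congrArg Prod.fst this, congrArg Prod.snd this⟩
  · rintro ⟨h1, h2⟩
    show Multiplicative.ofAdd (_, _) = 1
    rw [h1, h2]
    rfl

instance : Finite (Mdl N J) := by
  have : Mdl N J ≃ (ZMod N × ZMod N × ZMod J) :=
    ⟨fun g => (g.x, g.y, g.z), fun t => ⟨t.1, t.2.1, t.2.2⟩, fun g => rfl, fun t => rfl⟩
  exact Finite.of_equiv _ this.symm

lemma card_mdl : Nat.card (Mdl N J) = N * N * J := by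
  have e : Mdl N J ≃ (ZMod N × ZMod N × ZMod J) :=
    ⟨fun g => (g.x, g.y, g.z), fun t => ⟨t.1, t.2.1, t.2.2⟩, fun g => rfl, fun t => rfl⟩
  rw [Nat.card_congr e]
  simp [Nat.card_prod, Nat.card_zmod, mul_assoc]

lemma card_center_eq : N * N * J = (J * J) * Nat.card (Subgroup.center (Mdl N J)) := by
  have h1 : Nat.card (Mdl N J) =
      Nat.card (Multiplicative (ZMod J × ZMod J)) *
        Nat.card (outerHom (N := N) (J := J)).ker := by
    rw [Subgroup.card_eq_card_quotient_mul_card_subgroup (outerHom (N := N) (J := J)).ker]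
    congr 1
    exact Nat.card_congr
      (QuotientGroup.quotientKerEquivOfSurjective _ outerHom_surjective).toEquiv
  have h2 : Nat.card (Multiplicative (ZMod J × ZMod J)) = J * J := by
    rw [Nat.card_congr (Multiplicative.ofAdd (α := ZMod J × ZMod J)).symm, Nat.card_prod,
      Nat.card_zmod]
  rw [card_mdl, h2, ker_outerHom] at h1
  exact h1

end Mdl



section KSide

variable (p e j : ℕ)

/-- The commutator `[b,a]` in `K(p,e,j)`. -/
def kc : KGroup p e j := ⁅kb p e j, ka p e j⁆

/-- The quotient map onto `K(p,e,j)`. -/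
def kmk : FreeGroup Bool →* KGroup p e j :=
  QuotientGroup.mk' (Subgroup.normalClosure (KRels p e j))

lemma kmk_rel {r : FreeGroup Bool} (hr : r ∈ KRels p e j) : kmk p e j r = 1 := by
  exact (QuotientGroup.eq_one_iff r).2 (Subgroup.subset_normalClosure hr)

lemma kmk_fA : kmk p e j fA = ka p e j := rfl
lemma kmk_fB : kmk p e j fB = kb p e j := rfl

lemma ka_pow : ka p e j ^ p ^ e = 1 := by
  have h := kmk_rel p e j (show fA ^ p ^ e ∈ KRels p e j by simp [KRels])
  rwa [map_pow, kmk_fA] at h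

lemma kb_pow : kb p e j ^ p ^ e = 1 := by
  have h := kmk_rel p e j (show fB ^ p ^ e ∈ KRels p e j by simp [KRels])
  rwa [map_pow, kmk_fB] at h

lemma kc_pow : kc p e j ^ p ^ j = 1 := by
  have h := kmk_rel p e j (show ⁅fB, fA⁆ ^ p ^ j ∈ KRels p e j by simp [KRels])
  rwa [map_pow, map_commutatorElement, kmk_fA, kmk_fB, ← kc] at h

lemma kc_comm_b : Commute (kc p e j) (kb p e j) := by
  have h := kmk_rel p e j (show ⁅⁅fB, fA⁆, fB⁆ ∈ KRels p e j by simp [KRels])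
  rw [map_commutatorElement, map_commutatorElement, kmk_fA, kmk_fB, ← kc,
    commutatorElement_eq_one_iff_commute] at h
  exact h

lemma kc_comm_a : Commute (kc p e j) (ka p e j) := by
  have h := kmk_rel p e j (show ⁅⁅fB, fA⁆, fA⁆ ∈ KRels p e j by simp [KRels])
  rw [map_commutatorElement, map_commutatorElement, kmk_fA, kmk_fB, ← kc,
    commutatorElement_eq_one_iff_commute] at h
  exact h

lemma closure_ka_kb : Subgroup.closure {ka p e j, kb p e j} = ⊤ := by
  have h := PresentedGroup.closure_range_of (KRels p e j)
  have hr : Set.range (PresentedGroup.of : Bool → KGroup p e j) = {ka p e j, kb p e j} := by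
    ext g
    constructor
    · rintro ⟨(_ | _), rfl⟩
      · exact Set.mem_insert_of_mem _ rfl
      · exact Set.mem_insert _ _
    · rintro (rfl | rfl)
      · exact ⟨true, rfl⟩
      · exact ⟨false, rfl⟩
  rwa [hr] at h

lemma kc_central (g : KGroup p e j) : Commute (kc p e j) g := by
  have htop : Subgroup.centralizer {kc p e j} = ⊤ := by
    rw [eq_top_iff, ← closure_ka_kb, Subgroup.closure_le]
    rintro x (rfl | rfl)
    · exact Subgroup.mem_centralizer_iff.mpr (by rintro h rfl; exact (kc_comm_a p e j).eq)
    · exact Subgroup.mem_centralizer_iff.mpr (by rintro h rfl; exact (kc_comm_b p e j).eq)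
  have hg : g ∈ Subgroup.centralizer {kc p e j} := htop ▸ Subgroup.mem_top g
  exact Subgroup.mem_centralizer_iff.mp hg _ rfl

lemma ab_c : ka p e j * kb p e j * kc p e j = kb p e j * ka p e j := by
  rw [mul_assoc, (kc_central p e j (kb p e j)).eq.symm, ← mul_assoc,
    ((kc_central p e j (ka p e j)).eq).symm]
  rw [kc, commutatorElement_def]
  group

lemma b_apow (n : ℕ) :
    kb p e j * ka p e j ^ n = ka p e j ^ n * kb p e j * kc p e j ^ n := by
  induction n with
  | zero => simp
  | succ n ih =>
      rw [pow_succ, ← mul_assoc, ih, mul_assoc (ka p e j ^ n * kb p e j),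
        ((kc_central p e j (ka p e j)).pow_left n).eq, ← mul_assoc,
        mul_assoc (ka p e j ^ n), ← ab_c, pow_succ' (kc p e j)]
      group

lemma bpow_apow (m n : ℕ) :
    kb p e j ^ m * ka p e j ^ n = ka p e j ^ n * kb p e j ^ m * kc p e j ^ (n * m) := by
  induction m with
  | zero => simp
  | succ m ih =>
      rw [pow_succ (kb p e j), mul_assoc (kb p e j ^ m), b_apow, ← mul_assoc,
        ← mul_assoc, ih, Nat.mul_succ, pow_add,
        mul_assoc (ka p e j ^ n * kb p e j ^ m),
        ((kc_central p e j (kb p e j)).pow_left (n * m)).eq]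
      group

/-- normal form -/
def nf (x y z : ℕ) : KGroup p e j := ka p e j ^ x * kb p e j ^ y * kc p e j ^ z

lemma nf_mul (x1 y1 z1 x2 y2 z2 : ℕ) :
    nf p e j x1 y1 z1 * nf p e j x2 y2 z2
      = nf p e j (x1 + x2) (y1 + y2) (x2 * y1 + z1 + z2) := by
  unfold nf
  have hmove : ∀ (u v : KGroup p e j) (k : ℕ),
      u * kc p e j ^ k * v = u * v * kc p e j ^ k := fun u v k => by
    rw [mul_assoc, ((kc_central p e j v).pow_left k).eq, ← mul_assoc]
  calc ka p e j ^ x1 * kb p e j ^ y1 * kc p e j ^ z1 *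
        (ka p e j ^ x2 * kb p e j ^ y2 * kc p e j ^ z2)
      = ka p e j ^ x1 * kb p e j ^ y1 *
          (ka p e j ^ x2 * kb p e j ^ y2 * kc p e j ^ z2) * kc p e j ^ z1 := by
        rw [hmove]
    _ = ka p e j ^ x1 * (kb p e j ^ y1 * ka p e j ^ x2) *
          (kb p e j ^ y2 * kc p e j ^ z2) * kc p e j ^ z1 := by group
    _ = ka p e j ^ x1 * (ka p e j ^ x2 * kb p e j ^ y1 * kc p e j ^ (x2 * y1)) *
          (kb p e j ^ y2 * kc p e j ^ z2) * kc p e j ^ z1 := by rw [bpow_apow]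
    _ = ka p e j ^ x1 * (ka p e j ^ x2 * kb p e j ^ y1) * kc p e j ^ (x2 * y1) *
          (kb p e j ^ y2 * kc p e j ^ z2) * kc p e j ^ z1 := by group
    _ = ka p e j ^ x1 * (ka p e j ^ x2 * kb p e j ^ y1) *
          (kb p e j ^ y2 * kc p e j ^ z2) * kc p e j ^ (x2 * y1) * kc p e j ^ z1 := by
        rw [hmove]
    _ = ka p e j ^ (x1 + x2) * kb p e j ^ (y1 + y2) * kc p e j ^ (x2 * y1 + z1 + z2) := by
        rw [pow_add (ka p e j), pow_add (kb p e j),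
          show x2 * y1 + z1 + z2 = x2 * y1 + (z2 + z1) by ring, pow_add (kc p e j),
          pow_add (kc p e j)]
        group

end KSide


lemma pow_val_natCast {H : Type*} [Group H] {g : H} {n : ℕ} (h : g ^ n = 1) (m : ℕ) :
    g ^ ((m : ZMod n)).val = g ^ m := by
  rw [ZMod.val_natCast, ← pow_eq_pow_mod m h]

section KIso

variable (p e j : ℕ) [NeZero (p ^ e)] [NeZero (p ^ j)] [Fact (p ^ j ∣ p ^ e)]

/-- The normal-form map `Mdl → K` as a monoid hom. -/
def psiK : Mdl (p ^ e) (p ^ j) →* KGroup p e j where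
  toFun g := nf p e j g.x.val g.y.val g.z.val
  map_one' := by
    show nf p e j (0 : ZMod (p ^ e)).val (0 : ZMod (p ^ e)).val (0 : ZMod (p ^ j)).val = 1
    simp [nf, ZMod.val_zero]
  map_mul' g h := by
    show nf p e j _ _ _ = _
    rw [nf_mul]
    simp only [Mdl.mul_x, Mdl.mul_y, Mdl.mul_z]
    have e1 : ka p e j ^ (g.x + h.x).val = ka p e j ^ (g.x.val + h.x.val) := by
      rw [ZMod.val_add, ← pow_eq_pow_mod _ (ka_pow p e j)]
    have e2 : kb p e j ^ (g.y + h.y).val = kb p e j ^ (g.y.val + h.y.val) := by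
      rw [ZMod.val_add, ← pow_eq_pow_mod _ (kb_pow p e j)]
    have key : g.z + h.z + Mdl.pr (p ^ e) (p ^ j) h.x * Mdl.pr (p ^ e) (p ^ j) g.y
        = ((h.x.val * g.y.val + g.z.val + h.z.val : ℕ) : ZMod (p ^ j)) := by
      rw [Mdl.pr_eq_val, Mdl.pr_eq_val]
      push_cast
      rw [ZMod.natCast_val g.z, ZMod.natCast_val h.z, ZMod.cast_id, ZMod.cast_id]
      ring
    have e3 : kc p e j ^ (g.z + h.z +
          Mdl.pr (p ^ e) (p ^ j) h.x * Mdl.pr (p ^ e) (p ^ j) g.y).val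
        = kc p e j ^ (h.x.val * g.y.val + g.z.val + h.z.val) := by
      rw [key, pow_val_natCast (kc_pow p e j)]
    unfold nf
    rw [e1, e2, e3]

lemma krels_hold : ∀ r ∈ KRels p e j,
    FreeGroup.lift (fun t => bif t then (Mdl.A : Mdl (p ^ e) (p ^ j)) else Mdl.B) r = 1 := by
  intro r hr
  have hA : FreeGroup.lift (fun t => bif t then (Mdl.A : Mdl (p ^ e) (p ^ j)) else Mdl.B) fA
      = Mdl.A := FreeGroup.lift_apply_of
  have hB : FreeGroup.lift (fun t => bif t then (Mdl.A : Mdl (p ^ e) (p ^ j)) else Mdl.B) fB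
      = Mdl.B := FreeGroup.lift_apply_of
  simp only [KRels, Set.mem_insert_iff, Set.mem_singleton_iff] at hr
  rcases hr with rfl | rfl | rfl | rfl | rfl
  · rw [map_pow, hA, Mdl.pow_A]
    ext <;> simp [ZMod.natCast_self]
  · rw [map_pow, hB, Mdl.pow_B]
    ext <;> simp [ZMod.natCast_self]
  · rw [map_pow, map_commutatorElement, hA, hB, Mdl.comm_BA, Mdl.pow_C]
    ext <;> simp [ZMod.natCast_self]
  · rw [map_commutatorElement, map_commutatorElement, hA, hB, Mdl.comm_BA,
      commutatorElement_eq_one_iff_commute]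
    exact Mdl.C_central _
  · rw [map_commutatorElement, map_commutatorElement, hA, hB, Mdl.comm_BA,
      commutatorElement_eq_one_iff_commute]
    exact Mdl.C_central _

/-- The canonical hom `K → Mdl`. -/
def phiK : KGroup p e j →* Mdl (p ^ e) (p ^ j) :=
  PresentedGroup.toGroup (krels_hold p e j)

lemma phiK_ka : phiK p e j (ka p e j) = Mdl.A := PresentedGroup.toGroup.of _
lemma phiK_kb : phiK p e j (kb p e j) = Mdl.B := PresentedGroup.toGroup.of _
lemma phiK_kc : phiK p e j (kc p e j) = Mdl.C := by
  rw [kc, map_commutatorElement, phiK_ka, phiK_kb, Mdl.comm_BA]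

variable [Fact (1 < p ^ e)]

/-- The isomorphism `K(p,e,j) ≃ Mdl`. -/
def kIso : KGroup p e j ≃* Mdl (p ^ e) (p ^ j) where
  toFun := phiK p e j
  invFun := psiK p e j
  left_inv k := by
    have hcomp : (psiK p e j).comp (phiK p e j) = MonoidHom.id _ := by
      apply PresentedGroup.ext
      intro t
      cases t
      · show psiK p e j (phiK p e j (kb p e j)) = kb p e j
        rw [phiK_kb]
        show nf p e j (0 : ZMod (p ^ e)).val (1 : ZMod (p ^ e)).val
          (0 : ZMod (p ^ j)).val = kb p e j
        simp [nf, ZMod.val_zero, ZMod.val_one]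
      · show psiK p e j (phiK p e j (ka p e j)) = ka p e j
        rw [phiK_ka]
        show nf p e j (1 : ZMod (p ^ e)).val (0 : ZMod (p ^ e)).val
          (0 : ZMod (p ^ j)).val = ka p e j
        simp [nf, ZMod.val_zero, ZMod.val_one]
    exact DFunLike.congr_fun hcomp k
  right_inv m := by
    show phiK p e j (psiK p e j m) = m
    have : psiK p e j m = nf p e j m.x.val m.y.val m.z.val := rfl
    rw [this]
    unfold nf
    rw [map_mul, map_mul, map_pow, map_pow, map_pow, phiK_ka, phiK_kb, phiK_kc,
      Mdl.pow_A, Mdl.pow_B, Mdl.pow_C]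
    ext <;> simp [ZMod.natCast_val, ZMod.cast_id]
  map_mul' := map_mul (phiK p e j)

end KIso

section Transfer

variable {G H : Type*} [Group G] [Group H]

lemma map_center_eq (f : G ≃* H) :
    (Subgroup.center G).map f.toMonoidHom = Subgroup.center H := by
  ext h
  constructor
  · rintro ⟨g, hg, rfl⟩
    rw [Subgroup.mem_center_iff]
    intro k
    obtain ⟨k', rfl⟩ := f.surjective k
    show f k' * f g = f g * f k'
    rw [← map_mul, ← map_mul, Subgroup.mem_center_iff.mp hg k']
  · intro hh
    refine ⟨f.symm h, ?_, by simp⟩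
    rw [SetLike.mem_coe, Subgroup.mem_center_iff]
    intro k
    apply f.injective
    rw [map_mul, map_mul, MulEquiv.apply_symm_apply]
    exact Subgroup.mem_center_iff.mp hh (f k)

lemma map_powSubgroup_eq (f : G ≃* H) (n : ℕ) :
    (powSubgroup G n).map f.toMonoidHom = powSubgroup H n := by
  rw [powSubgroup, MonoidHom.map_closure, powSubgroup]
  congr 1
  ext h
  constructor
  · rintro ⟨-, ⟨g, rfl⟩, rfl⟩
    exact ⟨f g, (map_pow f g n).symm⟩
  · rintro ⟨g, rfl⟩
    exact ⟨f.symm g ^ n, ⟨f.symm g, rfl⟩, by rw [map_pow]; simp⟩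

lemma map_commutator_eq' (f : G ≃* H) :
    (_root_.commutator G).map f.toMonoidHom = _root_.commutator H := by
  rw [_root_.commutator_def, Subgroup.map_commutator, _root_.commutator_def,
    Subgroup.map_top_of_surjective _ f.surjective]

lemma card_center_congr (f : G ≃* H) :
    Nat.card (Subgroup.center G) = Nat.card (Subgroup.center H) := by
  rw [← map_center_eq f]
  exact Nat.card_congr
    (Subgroup.equivMapOfInjective (Subgroup.center G) f.toMonoidHom f.injective).toEquiv

end Transfer


theorem statement10 (p e j : ℕ) (hp : p.Prime) (hodd : Odd p) (hj : 0 < j) (hje : j ≤ e) :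
    Subgroup.center (KGroup p e j) =
      powSubgroup (KGroup p e j) (p ^ j) ⊔ commutator (KGroup p e j) ∧
    Nat.card (Subgroup.center (KGroup p e j)) = p ^ (2 * e - j) := by
  haveI : Fact (p ^ j ∣ p ^ e) := ⟨pow_dvd_pow p hje⟩
  haveI : NeZero (p ^ e) := ⟨(pow_pos hp.pos e).ne'⟩
  haveI : NeZero (p ^ j) := ⟨(pow_pos hp.pos j).ne'⟩
  haveI : Fact (1 < p ^ e) := ⟨Nat.one_lt_pow (by omega) hp.one_lt⟩
  set f := kIso p e j
  constructor
  · apply Subgroup.map_injective (f := f.toMonoidHom) f.injective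
    rw [map_center_eq f, Subgroup.map_sup, map_powSubgroup_eq f, map_commutator_eq' f,
      Mdl.sup_eq_center]
  · rw [card_center_congr f]
    have h2 := Mdl.card_center_eq (N := p ^ e) (J := p ^ j)
    have h3 : (p ^ j * p ^ j) * Nat.card (Subgroup.center (Mdl (p ^ e) (p ^ j)))
        = (p ^ j * p ^ j) * p ^ (2 * e - j) := by
      rw [← h2, ← pow_add, ← pow_add, ← pow_add, ← pow_add]
      congr 1
      omega
    exact Nat.eq_of_mul_eq_mul_left
      (Nat.mul_pos (pow_pos hp.pos j) (pow_pos hp.pos j)) h3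

end Statements

end Beauville
end

section
/- Let G be a 2-generated finite group. Then J(G) = {β_w : w a word in two letters} is a normal subgroup of ⟨σ₁, σ₄⟩ ≤ Sym(𝕋(G)). Moreover, if G is nilpotent and non-cyclic, then the quotient ⟨σ₁, σ₄⟩/J(G) is isomorphic to the symmetric group S₃. -/
open Subgroup Equiv
open scoped commutatorElement

namespace Beauville

variable {G : Type*} [Group G]

section Aux

/-! ### Word evaluation and the homomorphism `betaHom` -/

@[simp] lemma betaRaw_apply (w : FreeGroup Bool) (t : G × G × G) :
    betaRaw w t = conjTriple (wordEval w t.1 t.2.1) t := rfl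

lemma wordEval_one (x y : G) : wordEval (1 : FreeGroup Bool) x y = 1 := map_one _

lemma wordEval_mul (w v : FreeGroup Bool) (x y : G) :
    wordEval (w * v) x y = wordEval w x y * wordEval v x y := map_mul _ _ _

lemma betaT_coe (w : FreeGroup Bool) (t : TripleSet G) :
    ((betaT G w t : G × G × G)) = betaRaw w (t : G × G × G) := rfl

lemma betaT_one : betaT G (1 : FreeGroup Bool) = 1 := by
  refine Equiv.ext fun t => Subtype.ext ?_
  show betaRaw 1 (t : G × G × G) = (t : G × G × G)
  simp [wordEval_one]

lemma betaT_mul (w v : FreeGroup Bool) : betaT G (w * v) = betaT G w * betaT G v := by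
  refine Equiv.ext fun t => Subtype.ext ?_
  show betaRaw (w * v) (t : G × G × G) = betaRaw w (betaRaw v (t : G × G × G))
  obtain ⟨⟨x, y, z⟩, ht⟩ := t
  simp only [betaRaw_apply, conjTriple, wordEval_conj, wordEval_mul]
  refine Prod.ext ?_ (Prod.ext ?_ ?_) <;> simp <;> group

/-- `w ↦ β_w` as a monoid homomorphism. -/
def betaHom (G : Type*) [Group G] : FreeGroup Bool →* Equiv.Perm (TripleSet G) where
  toFun := betaT G
  map_one' := betaT_one
  map_mul' := betaT_mul

end Aux

section Aux2

/-! ### Relations among `σ₁`, `σ₄` and the `β_w` -/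

/-- Substitution `A ↦ (AB)⁻¹`, `B ↦ A` of the free group. -/
def phi1 : FreeGroup Bool →* FreeGroup Bool :=
  FreeGroup.lift (fun b => bif b then (fA * fB)⁻¹ else fA)

/-- Substitution `A ↦ B`, `B ↦ A` of the free group. -/
def phi4 : FreeGroup Bool →* FreeGroup Bool :=
  FreeGroup.lift (fun b => bif b then fB else fA)

lemma wordEval_phi1 (w : FreeGroup Bool) (x y : G) :
    wordEval (phi1 w) x y = wordEval w ((x * y)⁻¹) x := by
  have key : (FreeGroup.lift (fun b => bif b then x else y)).comp phi1
      = FreeGroup.lift (fun b => bif b then (x * y)⁻¹ else x) := by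
    apply FreeGroup.ext_hom
    intro b
    cases b <;> simp [phi1, fA, fB, wordEval]
  exact DFunLike.congr_fun key w

lemma wordEval_phi4 (w : FreeGroup Bool) (x y : G) :
    wordEval (phi4 w) x y = wordEval w y x := by
  have key : (FreeGroup.lift (fun b => bif b then x else y)).comp phi4
      = FreeGroup.lift (fun b => bif b then y else x) := by
    apply FreeGroup.ext_hom
    intro b
    cases b <;> simp [phi4, fA, fB, wordEval]
  exact DFunLike.congr_fun key w

lemma sigma1T_coe (t : TripleSet G) :
    ((sigma1T G t : G × G × G)) = rotRaw (t : G × G × G) := rfl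

lemma sigma4T_coe (t : TripleSet G) :
    ((sigma4T G t : G × G × G)) = sigma4Raw (t : G × G × G) := rfl

lemma sigma1T_cube : sigma1T G * sigma1T G * sigma1T G = 1 := by
  refine Equiv.ext fun t => Subtype.ext ?_
  show rotRaw (rotRaw (rotRaw (t : G × G × G))) = (t : G × G × G)
  rfl

lemma sigma4T_sq : sigma4T G * sigma4T G = 1 := by
  refine Equiv.ext fun t => Subtype.ext ?_
  obtain ⟨⟨x, y, z⟩, ht⟩ := t
  have hz : z = (x * y)⁻¹ := eq_inv_of_mul_eq_one_right ht.2
  show sigma4Raw (sigma4Raw (x, y, z)) = (x, y, z)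
  simp only [sigma4Raw_apply]
  refine Prod.ext rfl (Prod.ext rfl ?_)
  simp only [hz]
  group

/-- The key relation `σ₄σ₁σ₄σ₁ = β_B` (holds already on raw triples). -/
lemma rel_s4s1 : sigma4T G * sigma1T G * (sigma4T G * sigma1T G) = betaT G fB := by
  refine Equiv.ext fun t => Subtype.ext ?_
  obtain ⟨⟨x, y, z⟩, ht⟩ := t
  show sigma4Raw (rotRaw (sigma4Raw (rotRaw (x, y, z)))) = betaRaw fB (x, y, z)
  simp only [rotRaw_apply, sigma4Raw_apply, betaRaw_apply, conjTriple]
  have hB : wordEval fB x y = y := by simp [wordEval, fB]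
  rw [hB]
  refine Prod.ext rfl (Prod.ext ?_ rfl)
  group

lemma sigma1_beta (w : FreeGroup Bool) :
    sigma1T G * betaT G w = betaT G (phi1 w) * sigma1T G := by
  refine Equiv.ext fun t => Subtype.ext ?_
  obtain ⟨⟨x, y, z⟩, ht⟩ := t
  have hp := ht.2
  have hyz : (y * z)⁻¹ = x := by
    rw [mul_assoc] at hp
    exact (eq_inv_of_mul_eq_one_left hp).symm
  show rotRaw (betaRaw w (x, y, z)) = betaRaw (phi1 w) (rotRaw (x, y, z))
  simp only [rotRaw_apply, betaRaw_apply, conjTriple, wordEval_phi1, hyz]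

lemma sigma4_beta (w : FreeGroup Bool) :
    sigma4T G * betaT G w = betaT G (phi4 w) * sigma4T G := by
  refine Equiv.ext fun t => Subtype.ext ?_
  obtain ⟨⟨x, y, z⟩, ht⟩ := t
  show sigma4Raw (betaRaw w (x, y, z)) = betaRaw (phi4 w) (sigma4Raw (x, y, z))
  simp only [sigma4Raw_apply, betaRaw_apply, conjTriple, wordEval_phi4]
  refine Prod.ext rfl (Prod.ext rfl ?_)
  group

end Aux2

section Aux3

/-! ### Nilpotent groups: the commutator is contained in the Frattini subgroup -/

lemma commutator_le_coatom [Finite G] (hnil : Group.IsNilpotent G) {M : Subgroup G}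
    (hM : IsCoatom M) : commutator G ≤ M := by
  haveI := hnil
  haveI hnorm : M.Normal :=
    NormalizerCondition.normal_of_coatom M normalizerCondition_of_isNilpotent hM
  have hcyc : IsCyclic (G ⧸ M) := by
    obtain ⟨x, hx⟩ : ∃ x : G, x ∉ M := by
      by_contra h
      push_neg at h
      exact hM.1 (eq_top_iff.2 fun g _ => h g)
    have h1 : Subgroup.comap (QuotientGroup.mk' M)
        (Subgroup.zpowers ((x : G ⧸ M))) = ⊤ := by
      apply hM.2
      refine lt_of_le_of_ne (fun m hm => ?_) (fun h => hx ?_)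
      · have : ((m : G ⧸ M)) = 1 := (QuotientGroup.eq_one_iff m).2 hm
        simp only [Subgroup.mem_comap, QuotientGroup.mk'_apply, this]
        exact one_mem _
      · have : x ∈ Subgroup.comap (QuotientGroup.mk' M)
            (Subgroup.zpowers ((x : G ⧸ M))) := by
          simp [Subgroup.mem_comap, Subgroup.mem_zpowers]
        rwa [← h] at this
    refine ⟨⟨(x : G ⧸ M), fun a => ?_⟩⟩
    obtain ⟨g, rfl⟩ := QuotientGroup.mk_surjective a
    have : g ∈ Subgroup.comap (QuotientGroup.mk' M)
        (Subgroup.zpowers ((x : G ⧸ M))) := by rw [h1]; trivial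
    exact this
  letI : CommGroup (G ⧸ M) := hcyc.commGroup
  have h2 := Abelianization.commutator_subset_ker (QuotientGroup.mk' M)
  rwa [QuotientGroup.ker_mk'] at h2

lemma commutator_le_frattini' [Finite G] (hnil : Group.IsNilpotent G) :
    commutator G ≤ frattini G := by
  unfold frattini Order.radical
  exact le_iInf₂ fun M hM => commutator_le_coatom hnil hM

lemma isCyclic_of_zpowers_abelianization [Finite G] (hnil : Group.IsNilpotent G) (g : G)
    (hg : Subgroup.zpowers (Abelianization.of g) = ⊤) : IsCyclic G := by
  have hker : (Abelianization.of : G →* Abelianization G).ker = commutator G := by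
    ext x
    rw [MonoidHom.mem_ker]
    exact QuotientGroup.eq_one_iff x
  have hmap : Subgroup.map (Abelianization.of : G →* Abelianization G)
      (Subgroup.zpowers g) = ⊤ := by
    rw [MonoidHom.map_zpowers]
    exact hg
  have hsup : Subgroup.zpowers g ⊔ commutator G = ⊤ := by
    rw [← hker, ← Subgroup.comap_map_eq, hmap, Subgroup.comap_top]
  have htop : Subgroup.zpowers g = ⊤ := by
    apply frattini_nongenerating
    rw [eq_top_iff, ← hsup]
    exact sup_le le_sup_left (le_trans (commutator_le_frattini' hnil) le_sup_right)
  have hall : ∀ a : G, a ∈ Subgroup.zpowers g := fun a => by rw [htop]; trivial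
  exact ⟨⟨g, hall⟩⟩

/-! ### The abelianized coordinate triple -/

/-- The images of the three coordinates in the abelianization. -/
def abTriple (t : G × G × G) : Fin 3 → Abelianization G :=
  ![Abelianization.of t.1, Abelianization.of t.2.1, Abelianization.of t.2.2]

lemma exists_inj_triple [Finite G] (hnil : Group.IsNilpotent G) (hnc : ¬ IsCyclic G)
    {x y : G} (hxy : Subgroup.closure {x, y} = ⊤) :
    ∃ t : TripleSet G, Function.Injective (abTriple (t : G × G × G)) := by
  set u := Abelianization.of x with hu
  set v := Abelianization.of y with hv
  have huv : Subgroup.closure ({u, v} : Set (Abelianization G)) = ⊤ := by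
    have himg : ({u, v} : Set (Abelianization G)) =
        (Abelianization.of : G →* Abelianization G) '' {x, y} := (Set.image_pair _ _ _).symm
    rw [himg, ← MonoidHom.map_closure, hxy, ← MonoidHom.range_eq_map, MonoidHom.range_eq_top]
    exact fun a => QuotientGroup.mk_surjective a
  have key : ∀ a : Abelianization G, u ∈ Subgroup.zpowers a → v ∈ Subgroup.zpowers a →
      Subgroup.zpowers a = ⊤ := by
    intro a ha hb
    rw [eq_top_iff, ← huv, Subgroup.closure_le]
    intro g hg
    rcases hg with rfl | hg
    · exact ha
    · rcases hg with rfl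
      exact hb
  have hne1 : u ≠ v := by
    intro h
    exact hnc (isCyclic_of_zpowers_abelianization hnil x
      (key u (Subgroup.mem_zpowers u) (h ▸ Subgroup.mem_zpowers u)))
  have hne2 : u ≠ (u * v)⁻¹ := by
    intro h
    have hv2 : v = u⁻¹ * u⁻¹ := by
      have h1 : u * v = u⁻¹ := by rw [← inv_inv (u * v), ← h]
      calc v = u⁻¹ * (u * v) := by group
      _ = u⁻¹ * u⁻¹ := by rw [h1]
    exact hnc (isCyclic_of_zpowers_abelianization hnil x
      (key u (Subgroup.mem_zpowers u)
        (hv2 ▸ mul_mem (inv_mem (Subgroup.mem_zpowers u)) (inv_mem (Subgroup.mem_zpowers u)))))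
  have hne3 : v ≠ (u * v)⁻¹ := by
    intro h
    have hu2 : u = v⁻¹ * v⁻¹ := by
      have h1 : u * v = v⁻¹ := by rw [← inv_inv (u * v), ← h]
      calc u = (u * v) * v⁻¹ := by group
      _ = v⁻¹ * v⁻¹ := by rw [h1]
    exact hnc (isCyclic_of_zpowers_abelianization hnil y
      (key v (hu2 ▸ mul_mem (inv_mem (Subgroup.mem_zpowers v)) (inv_mem (Subgroup.mem_zpowers v)))
        (Subgroup.mem_zpowers v)))
  refine ⟨⟨(x, y, (x * y)⁻¹), mem_tripleSet.2 ⟨hxy, by group⟩⟩, ?_⟩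
  have h3 : Abelianization.of ((x * y)⁻¹) = (u * v)⁻¹ := by simp [hu, hv]
  intro i j hij
  fin_cases i <;> fin_cases j <;>
      simp only [abTriple, Matrix.cons_val_zero, Matrix.cons_val_one, Matrix.head_cons,
        Matrix.cons_val_two, Matrix.tail_cons, h3, ← hu, ← hv] at hij ⊢ <;>
    first
      | rfl
      | exact absurd hij hne1
      | exact absurd hij hne1.symm
      | exact absurd hij hne2
      | exact absurd hij hne2.symm
      | exact absurd hij hne3
      | exact absurd hij hne3.symm

end Aux3

section Aux4

/-! ### Compatibility of permutations of `𝕋(G)` with permutations of the coordinates -/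

lemma conj_ab (a b : Abelianization G) : a⁻¹ * b * a = b := by
  rw [mul_comm (a⁻¹ * b) a, ← mul_assoc, mul_inv_cancel, one_mul]

/-- `ρ` permutes the abelianized coordinates of every triple via `e`. -/
def Compat (ρ : Equiv.Perm (TripleSet G)) (e : Equiv.Perm (Fin 3)) : Prop :=
  ∀ t : TripleSet G, abTriple ((ρ t : G × G × G)) = abTriple (t : G × G × G) ∘ ⇑e⁻¹

lemma compat_one : Compat (1 : Equiv.Perm (TripleSet G)) 1 := fun t => by
  simp only [Equiv.Perm.coe_one, id_eq, inv_one]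
  rfl

lemma compat_mul {ρ ρ' : Equiv.Perm (TripleSet G)} {e e' : Equiv.Perm (Fin 3)}
    (h : Compat ρ e) (h' : Compat ρ' e') : Compat (ρ * ρ') (e * e') := fun t => by
  calc abTriple (((ρ * ρ') t : G × G × G)) = abTriple ((ρ (ρ' t) : G × G × G)) := rfl
    _ = abTriple ((ρ' t : G × G × G)) ∘ ⇑e⁻¹ := h (ρ' t)
    _ = (abTriple (t : G × G × G) ∘ ⇑e'⁻¹) ∘ ⇑e⁻¹ := by rw [h' t]
    _ = abTriple (t : G × G × G) ∘ ⇑(e * e')⁻¹ := by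
        rw [mul_inv_rev, Equiv.Perm.coe_mul]
        rfl

lemma compat_inv {ρ : Equiv.Perm (TripleSet G)} {e : Equiv.Perm (Fin 3)}
    (h : Compat ρ e) : Compat ρ⁻¹ e⁻¹ := fun t => by
  have h1 := h (ρ⁻¹ t)
  rw [show ρ (ρ⁻¹ t) = t from Equiv.Perm.eq_inv_iff_eq.1 rfl] at h1
  funext i
  have h2 := congrFun h1 (e i)
  simp only [Function.comp_apply, show e⁻¹ (e i) = i from Equiv.Perm.inv_eq_iff_eq.2 rfl] at h2
  simp only [Function.comp_apply, inv_inv]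
  exact h2.symm

lemma compat_beta (w : FreeGroup Bool) : Compat (betaT G w) 1 := fun t => by
  obtain ⟨⟨x, y, z⟩, ht⟩ := t
  show abTriple (betaRaw w (x, y, z)) = abTriple (x, y, z) ∘ ⇑(1 : Equiv.Perm (Fin 3))⁻¹
  simp only [inv_one, Equiv.Perm.coe_one, Function.comp_id, betaRaw_apply, conjTriple]
  funext i
  fin_cases i <;> simp [abTriple, conj_ab]

lemma compat_sigma1 : Compat (sigma1T G) (finRotate 3)⁻¹ := fun t => by
  obtain ⟨⟨x, y, z⟩, ht⟩ := t
  show abTriple (rotRaw (x, y, z)) = abTriple (x, y, z) ∘ ⇑(finRotate 3)⁻¹⁻¹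
  rw [inv_inv]
  funext i
  fin_cases i <;>
    simp only [rotRaw_apply, abTriple, Function.comp_apply] <;>
    rfl

lemma compat_sigma4 : Compat (sigma4T G) (Equiv.swap 0 1) := fun t => by
  obtain ⟨⟨x, y, z⟩, ht⟩ := t
  show abTriple (sigma4Raw (x, y, z)) = abTriple (x, y, z) ∘ ⇑(Equiv.swap (0 : Fin 3) 1)⁻¹
  rw [Equiv.swap_inv]
  funext i
  fin_cases i <;>
    simp only [sigma4Raw_apply, abTriple, Function.comp_apply] <;>
    simp [conj_ab, Equiv.swap_apply_of_ne_of_ne]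

end Aux4

section Aux5

/-! ### Coset decomposition of `⟨σ₁, σ₄⟩` modulo `J(G)` -/

lemma s1_inv : (sigma1T G)⁻¹ = sigma1T G * sigma1T G :=
  (eq_inv_of_mul_eq_one_left sigma1T_cube).symm

lemma s4_inv : (sigma4T G)⁻¹ = sigma4T G :=
  (eq_inv_of_mul_eq_one_left sigma4T_sq).symm

lemma rel_C : sigma4T G * sigma1T G
    = betaT G fB * (sigma1T G * (sigma1T G * sigma4T G)) := by
  have h1 : sigma4T G * sigma1T G = betaT G fB * (sigma4T G * sigma1T G)⁻¹ :=
    eq_mul_inv_iff_mul_eq.2 rel_s4s1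
  rw [h1, mul_inv_rev, s1_inv, s4_inv, mul_assoc]

lemma rA (ρ : Equiv.Perm (TripleSet G)) :
    sigma1T G * (sigma1T G * (sigma1T G * ρ)) = ρ := by
  rw [← mul_assoc, ← mul_assoc, sigma1T_cube, one_mul]

lemma rW1 (w : FreeGroup Bool) (ρ : Equiv.Perm (TripleSet G)) :
    sigma1T G * (betaT G w * ρ) = betaT G (phi1 w) * (sigma1T G * ρ) := by
  rw [← mul_assoc, sigma1_beta, mul_assoc]

lemma rW4 (w : FreeGroup Bool) (ρ : Equiv.Perm (TripleSet G)) :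
    sigma4T G * (betaT G w * ρ) = betaT G (phi4 w) * (sigma4T G * ρ) := by
  rw [← mul_assoc, sigma4_beta, mul_assoc]

lemma rBm (w v : FreeGroup Bool) (ρ : Equiv.Perm (TripleSet G)) :
    betaT G w * (betaT G v * ρ) = betaT G (w * v) * ρ := by
  rw [← mul_assoc, ← betaT_mul]

/-- Decomposition into one of the six cosets of `J(G)` in `⟨σ₁, σ₄⟩`. -/
def Decomp (ρ : Equiv.Perm (TripleSet G)) : Prop :=
  ∃ w : FreeGroup Bool,
    ρ = betaT G w ∨
    ρ = betaT G w * sigma1T G ∨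
    ρ = betaT G w * (sigma1T G * sigma1T G) ∨
    ρ = betaT G w * sigma4T G ∨
    ρ = betaT G w * (sigma1T G * sigma4T G) ∨
    ρ = betaT G w * (sigma1T G * (sigma1T G * sigma4T G))

lemma decomp_mul_s1 {ρ : Equiv.Perm (TripleSet G)} (h : Decomp ρ) :
    Decomp (ρ * sigma1T G) := by
  obtain ⟨w, rfl | rfl | rfl | rfl | rfl | rfl⟩ := h
  · exact ⟨w, Or.inr (Or.inl rfl)⟩
  · exact ⟨w, Or.inr (Or.inr (Or.inl (mul_assoc _ _ _)))⟩
  · refine ⟨w, Or.inl ?_⟩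
    rw [mul_assoc, sigma1T_cube, mul_one]
  · refine ⟨w * fB, Or.inr (Or.inr (Or.inr (Or.inr (Or.inr ?_))))⟩
    rw [mul_assoc, rel_C, ← mul_assoc, ← betaT_mul]
  · refine ⟨w * phi1 fB, Or.inr (Or.inr (Or.inr (Or.inl ?_)))⟩
    rw [mul_assoc, mul_assoc, rel_C, rW1, rA, rBm]
  · refine ⟨w * phi1 (phi1 fB), Or.inr (Or.inr (Or.inr (Or.inr (Or.inl ?_))))⟩
    rw [mul_assoc, mul_assoc, mul_assoc, rel_C, rW1, rW1, rA, rBm]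

lemma decomp_mul_s4 {ρ : Equiv.Perm (TripleSet G)} (h : Decomp ρ) :
    Decomp (ρ * sigma4T G) := by
  obtain ⟨w, rfl | rfl | rfl | rfl | rfl | rfl⟩ := h
  · exact ⟨w, Or.inr (Or.inr (Or.inr (Or.inl rfl)))⟩
  · exact ⟨w, Or.inr (Or.inr (Or.inr (Or.inr (Or.inl (mul_assoc _ _ _)))))⟩
  · refine ⟨w, Or.inr (Or.inr (Or.inr (Or.inr (Or.inr ?_))))⟩
    rw [mul_assoc, mul_assoc]
  · refine ⟨w, Or.inl ?_⟩
    rw [mul_assoc, sigma4T_sq, mul_one]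
  · refine ⟨w, Or.inr (Or.inl ?_)⟩
    rw [mul_assoc, mul_assoc, sigma4T_sq, mul_one]
  · refine ⟨w, Or.inr (Or.inr (Or.inl ?_))⟩
    rw [mul_assoc, mul_assoc, mul_assoc, sigma4T_sq, mul_one]

lemma decomp_of_mem {ρ : Equiv.Perm (TripleSet G)} (h : ρ ∈ SS14 G) : Decomp ρ := by
  unfold SS14 at h
  induction h using Subgroup.closure_induction_right with
  | one => exact ⟨1, Or.inl betaT_one.symm⟩
  | mul_right x hx y hy hD =>
    simp only [Set.mem_insert_iff, Set.mem_singleton_iff] at hy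
    rcases hy with rfl | rfl
    · exact decomp_mul_s1 hD
    · exact decomp_mul_s4 hD
  | mul_inv_cancel x hx y hy hD =>
    simp only [Set.mem_insert_iff, Set.mem_singleton_iff] at hy
    rcases hy with rfl | rfl
    · rw [s1_inv, ← mul_assoc]
      exact decomp_mul_s1 (decomp_mul_s1 hD)
    · rw [s4_inv]
      exact decomp_mul_s4 hD

end Aux5

section Aux6

/-! ### Membership and conjugation facts for `⟨σ₁, σ₄⟩` -/

lemma hs1_mem : sigma1T G ∈ SS14 G :=
  Subgroup.subset_closure (Set.mem_insert _ _)

lemma hs4_mem : sigma4T G ∈ SS14 G :=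
  Subgroup.subset_closure (Set.mem_insert_of_mem _ rfl)

lemma hfB_mem : betaT G fB ∈ SS14 G := by
  rw [← rel_s4s1]
  exact mul_mem (mul_mem hs4_mem hs1_mem) (mul_mem hs4_mem hs1_mem)

lemma phi1_fB : phi1 fB = fA := by
  simp [phi1, fB, fA]

lemma conj_s1 (w : FreeGroup Bool) :
    sigma1T G * betaT G w * (sigma1T G)⁻¹ = betaT G (phi1 w) := by
  rw [sigma1_beta, mul_inv_cancel_right]

lemma conj_s4 (w : FreeGroup Bool) :
    sigma4T G * betaT G w * (sigma4T G)⁻¹ = betaT G (phi4 w) := by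
  rw [sigma4_beta, mul_inv_cancel_right]

lemma s1_inv_inv : (sigma1T G)⁻¹ * (sigma1T G)⁻¹ = sigma1T G := by
  rw [← mul_inv_rev, ← s1_inv, inv_inv]

lemma conj_s1_inv (w : FreeGroup Bool) :
    (sigma1T G)⁻¹ * betaT G w * sigma1T G = betaT G (phi1 (phi1 w)) := by
  have e1 : sigma1T G * (sigma1T G * betaT G w * (sigma1T G)⁻¹) * (sigma1T G)⁻¹
      = (sigma1T G * sigma1T G) * betaT G w * ((sigma1T G)⁻¹ * (sigma1T G)⁻¹) := by group
  rw [← conj_s1 (phi1 w), ← conj_s1 w, e1, ← s1_inv, s1_inv_inv]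

lemma conj_s4_inv (w : FreeGroup Bool) :
    (sigma4T G)⁻¹ * betaT G w * sigma4T G = betaT G (phi4 w) := by
  rw [s4_inv, ← conj_s4 w, s4_inv]

lemma hfA_mem : betaT G fA ∈ SS14 G := by
  rw [← phi1_fB, ← conj_s1]
  exact mul_mem (mul_mem hs1_mem hfB_mem) (inv_mem hs1_mem)

lemma mem_JSet_iff {ρ : Equiv.Perm (TripleSet G)} :
    ρ ∈ (betaHom G).range ↔ ∃ w, betaT G w = ρ := Iff.rfl

lemma SS14_le_normalizer : SS14 G ≤ Subgroup.normalizer ((betaHom G).range : Set (Equiv.Perm (TripleSet G))) := by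
  rw [SS14, Subgroup.closure_le]
  intro g hg
  have key : ∀ g : Equiv.Perm (TripleSet G),
      (∀ w, ∃ v, g * betaT G w * g⁻¹ = betaT G v) →
      (∀ w, ∃ v, g⁻¹ * betaT G w * g = betaT G v) →
      g ∈ Subgroup.normalizer ((betaHom G).range : Set (Equiv.Perm (TripleSet G))) := by
    intro g h1 h2
    rw [Subgroup.mem_normalizer_iff]
    intro h
    constructor
    · rintro ⟨w, rfl⟩
      obtain ⟨v, hv⟩ := h1 w
      exact ⟨v, hv.symm⟩
    · rintro ⟨w, hw⟩
      have hh : h = g⁻¹ * (g * h * g⁻¹) * g := by group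
      rw [hh, ← hw]
      obtain ⟨v, hv⟩ := h2 w
      exact ⟨v, hv.symm⟩
  rcases hg with rfl | hg
  · exact key _ (fun w => ⟨phi1 w, conj_s1 w⟩) (fun w => ⟨phi1 (phi1 w), conj_s1_inv w⟩)
  · rcases hg with rfl
    exact key _ (fun w => ⟨phi4 w, conj_s4 w⟩) (fun w => ⟨phi4 w, conj_s4_inv w⟩)

end Aux6

section Statements

theorem statement13 (G : Type*) [Group G] [Finite G]
    (h2gen : ∃ x y : G, Subgroup.closure {x, y} = ⊤) :
    ∃ J : Subgroup (Equiv.Perm (TripleSet G)),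
      (J : Set (Equiv.Perm (TripleSet G))) = JSet G ∧ J ≤ SS14 G ∧
      (J.subgroupOf (SS14 G)).Normal ∧
      (Group.IsNilpotent G → ¬ IsCyclic G →
        ∃ φ : SS14 G →* Equiv.Perm (Fin 3), Function.Surjective φ ∧
          ∀ x : SS14 G, φ x = 1 ↔ (x : Equiv.Perm (TripleSet G)) ∈ JSet G) := by
  classical
  have hJSet : ((betaHom G).range : Set (Equiv.Perm (TripleSet G))) = JSet G := rfl
  refine ⟨(betaHom G).range, hJSet, ?_, ?_, ?_⟩
  · -- J ≤ SS14
    rintro ρ ⟨w, rfl⟩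
    show betaT G w ∈ SS14 G
    induction w using FreeGroup.induction_on with
    | C1 => rw [betaT_one]; exact one_mem _
    | of b =>
      cases b
      · exact hfB_mem
      · exact hfA_mem
    | inv_of b hb =>
      have : betaT G (FreeGroup.of b : FreeGroup Bool)⁻¹ = (betaT G (FreeGroup.of b : FreeGroup Bool))⁻¹ :=
        map_inv (betaHom G) _
      rw [this]
      exact inv_mem hb
    | mul u v hu hv =>
      rw [betaT_mul]
      exact mul_mem hu hv
  · -- normality
    constructor
    intro n hn g
    rw [Subgroup.mem_subgroupOf] at hn ⊢
    have hg := SS14_le_normalizer g.2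
    rw [Subgroup.mem_normalizer_iff] at hg
    exact (hg (n : Equiv.Perm (TripleSet G))).1 hn
  · -- quotient is S₃
    intro hnil hnc
    obtain ⟨x0, y0, hxy0⟩ := h2gen
    obtain ⟨t₀, ht₀⟩ := exists_inj_triple hnil hnc hxy0
    have huniq : ∀ (ρ : Equiv.Perm (TripleSet G)) (e e' : Equiv.Perm (Fin 3)),
        Compat ρ e → Compat ρ e' → e = e' := by
      intro ρ e e' h h'
      have h1 := (h t₀).symm.trans (h' t₀)
      have h3 : e⁻¹ = e'⁻¹ := Equiv.ext fun i => ht₀ (congrFun h1 i)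
      rw [← inv_inv e, h3, inv_inv]
    have hex : ∀ ρ ∈ SS14 G, ∃ e, Compat ρ e := by
      intro ρ hρ
      rw [SS14] at hρ
      induction hρ using Subgroup.closure_induction with
      | mem g hg =>
        rcases hg with rfl | hg
        · exact ⟨(finRotate 3)⁻¹, compat_sigma1⟩
        · rcases hg with rfl
          exact ⟨Equiv.swap 0 1, compat_sigma4⟩
      | one => exact ⟨1, compat_one⟩
      | mul a b ha hb iha ihb =>
        obtain ⟨e, he⟩ := iha
        obtain ⟨e', he'⟩ := ihb
        exact ⟨e * e', compat_mul he he'⟩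
      | inv a ha iha =>
        obtain ⟨e, he⟩ := iha
        exact ⟨e⁻¹, compat_inv he⟩
    choose ψ hψ using fun ρ : SS14 G => hex (ρ : Equiv.Perm (TripleSet G)) ρ.2
    have hone : ψ 1 = 1 := huniq 1 _ _ (hψ 1) compat_one
    have hmul : ∀ a b : SS14 G, ψ (a * b) = ψ a * ψ b := fun a b =>
      huniq ((a : Equiv.Perm (TripleSet G)) * b) _ _ (hψ (a * b))
        (compat_mul (hψ a) (hψ b))
    set φ : SS14 G →* Equiv.Perm (Fin 3) :=
      { toFun := ψ, map_one' := hone, map_mul' := hmul } with hφ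
    have hval1 : φ ⟨sigma1T G, hs1_mem⟩ = (finRotate 3)⁻¹ :=
      huniq _ _ _ (hψ _) compat_sigma1
    have hval4 : φ ⟨sigma4T G, hs4_mem⟩ = Equiv.swap 0 1 :=
      huniq _ _ _ (hψ _) compat_sigma4
    refine ⟨φ, ?_, ?_⟩
    · -- surjectivity
      rw [← MonoidHom.range_eq_top]
      rw [eq_top_iff, ← Equiv.Perm.closure_cycle_adjacent_swap
        (isCycle_finRotate (n := 1)) support_finRotate 0, Subgroup.closure_le]
      intro e he
      rcases he with rfl | he
      · have : (finRotate 3) = ((finRotate 3)⁻¹)⁻¹ := (inv_inv _).symm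
        rw [this]
        exact inv_mem ⟨⟨sigma1T G, hs1_mem⟩, hval1⟩
      · rcases he with rfl
        have h30 : (finRotate 3) 0 = 1 := by decide
        rw [h30]
        exact ⟨⟨sigma4T G, hs4_mem⟩, hval4⟩
    · -- kernel
      intro a
      constructor
      · intro ha
        have hca : Compat (a : Equiv.Perm (TripleSet G)) 1 := by
          have := hψ a
          rwa [show ψ a = φ a from rfl, ha] at this
        obtain ⟨w, hcase⟩ := decomp_of_mem a.2
        rcases hcase with h | h | h | h | h | h
        · exact ⟨w, h.symm⟩
        · have hc2 : Compat (a : Equiv.Perm (TripleSet G)) (1 * (finRotate 3)⁻¹) := by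
            rw [h]; exact compat_mul (compat_beta w) compat_sigma1
          have := huniq _ _ _ hca hc2
          exact absurd this (by decide)
        · have hc2 : Compat (a : Equiv.Perm (TripleSet G))
              (1 * ((finRotate 3)⁻¹ * (finRotate 3)⁻¹)) := by
            rw [h]
            exact compat_mul (compat_beta w) (compat_mul compat_sigma1 compat_sigma1)
          have := huniq _ _ _ hca hc2
          exact absurd this (by decide)
        · have hc2 : Compat (a : Equiv.Perm (TripleSet G)) (1 * Equiv.swap 0 1) := by
            rw [h]; exact compat_mul (compat_beta w) compat_sigma4
          have := huniq _ _ _ hca hc2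
          exact absurd this (by decide)
        · have hc2 : Compat (a : Equiv.Perm (TripleSet G))
              (1 * ((finRotate 3)⁻¹ * Equiv.swap 0 1)) := by
            rw [h]
            exact compat_mul (compat_beta w) (compat_mul compat_sigma1 compat_sigma4)
          have := huniq _ _ _ hca hc2
          exact absurd this (by decide)
        · have hc2 : Compat (a : Equiv.Perm (TripleSet G))
              (1 * ((finRotate 3)⁻¹ * ((finRotate 3)⁻¹ * Equiv.swap 0 1))) := by
            rw [h]
            exact compat_mul (compat_beta w)
              (compat_mul compat_sigma1 (compat_mul compat_sigma1 compat_sigma4))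
          have := huniq _ _ _ hca hc2
          exact absurd this (by decide)
      · rintro ⟨w, hw⟩
        have hc : Compat (a : Equiv.Perm (TripleSet G)) 1 := by
          rw [← hw]; exact compat_beta w
        exact huniq _ _ _ (hψ a) hc

end Statements

end Beauville
end

section
/- Let p be a prime and let G be a Beauville p-group of nilpotency class 2. Then: (i) DInn(G) ∩ ⟨σ₁, σ₄⟩ = 1 inside Sym(𝕋(G)); (ii) the intersection of I(G) × I(G) with DDAut(G) inside Sym(𝕋(G)) × Sym(𝕋(G)) equals {(ι̃_g, ι̃_g) : g ∈ G}. -/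
open Subgroup Equiv

namespace Beauville

variable {G : Type*} [Group G]

section Aux

open scoped commutatorElement

set_option linter.unusedSectionVars false

/-! ### Marked words in two letters and constants -/

/-- Marked words: free group on two letters (`true`, `false`) and constants from `G`. -/
abbrev MW (G : Type*) := FreeGroup (Bool ⊕ G)

/-- The letter `X`. -/
def Xw {G : Type*} : MW G := FreeGroup.of (Sum.inl true)

/-- The letter `Y`. -/
def Yw {G : Type*} : MW G := FreeGroup.of (Sum.inl false)

/-- Evaluation of a marked word at a pair of group elements. -/
def Ew (x y : G) : MW G →* G :=
  FreeGroup.lift (Sum.elim (fun b => bif b then x else y) id)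

/-- Substitution of marked words for the two letters. -/
def substW (u v : MW G) : MW G →* MW G :=
  FreeGroup.lift (Sum.elim (fun b => bif b then u else v) (fun g => FreeGroup.of (Sum.inr g)))

/-- The product of the constants of a marked word. -/
def cstW : MW G →* G := FreeGroup.lift (Sum.elim (fun _ => (1 : G)) id)

/-- Exponent sum in the letter `Y`. -/
def eYW : MW G →* Multiplicative ℤ :=
  FreeGroup.lift (Sum.elim
    (fun b => bif b then (1 : Multiplicative ℤ) else Multiplicative.ofAdd 1) (fun _ => 1))

/-- Exponent sum in the letter `X`. -/
def eXW : MW G →* Multiplicative ℤ :=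
  FreeGroup.lift (Sum.elim
    (fun b => bif b then Multiplicative.ofAdd 1 else (1 : Multiplicative ℤ)) (fun _ => 1))

@[simp] lemma Ew_X (x y : G) : Ew x y Xw = x := by simp [Ew, Xw]
@[simp] lemma Ew_Y (x y : G) : Ew x y Yw = y := by simp [Ew, Yw]
@[simp] lemma Ew_cst (x y g : G) : Ew x y (FreeGroup.of (Sum.inr g)) = g := by simp [Ew]
@[simp] lemma Ew_one (x y : G) : Ew x y 1 = 1 := map_one _

lemma Ew_subst (x y : G) (u v w : MW G) :
    Ew x y (substW u v w) = Ew (Ew x y u) (Ew x y v) w := by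
  have h : (Ew x y).comp (substW u v) = Ew (Ew x y u) (Ew x y v) := by
    apply FreeGroup.ext_hom
    rintro (b | g)
    · cases b <;> simp [substW, Ew]
    · simp [substW, Ew]
  exact DFunLike.congr_fun h w

/-! ### Commutator calculus in class ≤ 2 groups -/

/-- `cmm a b = a⁻¹ b⁻¹ a b`, so that `b⁻¹ a b = a * cmm a b`. -/
def cmm (a b : G) : G := a⁻¹ * b⁻¹ * a * b

lemma conj_eq_cmm (a b : G) : b⁻¹ * a * b = a * cmm a b := by unfold cmm; group

@[simp] lemma cmm_self (a : G) : cmm a a = 1 := by unfold cmm; group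

@[simp] lemma cmm_one_right (a : G) : cmm a 1 = 1 := by unfold cmm; group

@[simp] lemma cmm_one_left (a : G) : cmm 1 a = 1 := by unfold cmm; group

/-- centrality of commutators, from `lowerCentralSeries G 2 = ⊥`. -/
lemma cmm_central (hbot : Subgroup.lowerCentralSeries (⊤ : Subgroup G) 2 = ⊥) (a b c : G) :
    Commute (cmm a b) c := by
  have hmem : cmm a b ∈ commutator G := by
    have h : cmm a b = ⁅a⁻¹, b⁻¹⁆ := by
      rw [commutatorElement_def]; unfold cmm; group
    rw [h, _root_.commutator_def]
    exact Subgroup.commutator_mem_commutator (Subgroup.mem_top _) (Subgroup.mem_top _)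
  have h2 : ⁅cmm a b, c⁆ ∈ Subgroup.lowerCentralSeries (⊤ : Subgroup G) 2 := by
    show ⁅cmm a b, c⁆ ∈ ⁅Subgroup.lowerCentralSeries (⊤ : Subgroup G) 1, ⊤⁆
    exact Subgroup.commutator_mem_commutator
      (by rwa [top_lowerCentralSeries_one]) (Subgroup.mem_top _)
  rw [hbot, Subgroup.mem_bot] at h2
  exact commutatorElement_eq_one_iff_commute.mp h2

section Central

variable (hcen : ∀ a b c : G, Commute (cmm a b) c)
include hcen

lemma cmm_mul_right (a u v : G) : cmm a (u * v) = cmm a u * cmm a v := by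
  have h : cmm a (u * v) = cmm a v * (v⁻¹ * cmm a u * v) := by unfold cmm; group
  have h2 : v⁻¹ * cmm a u * v = cmm a u := by
    rw [mul_assoc, (hcen a u v).eq, ← mul_assoc, inv_mul_cancel, one_mul]
  rw [h, h2, (hcen a v (cmm a u)).eq]

lemma cmm_mul_left (u v b : G) : cmm (u * v) b = cmm u b * cmm v b := by
  have h : cmm (u * v) b = (v⁻¹ * cmm u b * v) * cmm v b := by unfold cmm; group
  have h2 : v⁻¹ * cmm u b * v = cmm u b := by
    rw [mul_assoc, (hcen u b v).eq, ← mul_assoc, inv_mul_cancel, one_mul]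
  rw [h, h2]

lemma cmm_Ew_snd (x y : G) (w : MW G) :
    cmm x (Ew x y w) = cmm x y ^ Multiplicative.toAdd (eYW w) * cmm x (cstW w) := by
  let f1 : MW G →* G := MonoidHom.mk' (fun w => cmm x (Ew x y w)) (by
    intro u v
    show cmm x (Ew x y (u * v)) = cmm x (Ew x y u) * cmm x (Ew x y v)
    rw [map_mul]; exact cmm_mul_right hcen _ _ _)
  let f2 : MW G →* G := MonoidHom.mk'
    (fun w => cmm x y ^ Multiplicative.toAdd (eYW w) * cmm x (cstW w)) (by
    intro u v
    show cmm x y ^ Multiplicative.toAdd (eYW (u * v)) * cmm x (cstW (u * v)) = _ * _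
    rw [show eYW (u * v) = eYW u * eYW v from map_mul _ _ _,
      show cstW (u * v) = cstW u * cstW v from map_mul _ _ _, toAdd_mul, zpow_add,
      cmm_mul_right hcen]
    have hc : Commute (cmm x (cstW u)) (cmm x y ^ Multiplicative.toAdd (eYW v)) :=
      ((hcen x y (cmm x (cstW u))).zpow_left _).symm
    rw [mul_assoc, mul_assoc, ← mul_assoc (cmm x (cstW u)), hc.eq, mul_assoc])
  have h : f1 = f2 := by
    apply FreeGroup.ext_hom
    rintro (b | g)
    · cases b
      · show cmm x (Ew x y Yw) = cmm x y ^ Multiplicative.toAdd (eYW Yw) * cmm x (cstW Yw)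
        simp [Ew, eYW, cstW, Yw]
      · show cmm x (Ew x y Xw) = cmm x y ^ Multiplicative.toAdd (eYW Xw) * cmm x (cstW Xw)
        simp [Ew, eYW, cstW, Xw]
    · show cmm x (Ew x y _) = cmm x y ^ Multiplicative.toAdd (eYW _) * cmm x (cstW _)
      simp [Ew, eYW, cstW]
  exact DFunLike.congr_fun h w

lemma cmm_Ew_fst (x y : G) (w : MW G) :
    cmm y (Ew x y w) = cmm y x ^ Multiplicative.toAdd (eXW w) * cmm y (cstW w) := by
  let f1 : MW G →* G := MonoidHom.mk' (fun w => cmm y (Ew x y w)) (by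
    intro u v
    show cmm y (Ew x y (u * v)) = cmm y (Ew x y u) * cmm y (Ew x y v)
    rw [map_mul]; exact cmm_mul_right hcen _ _ _)
  let f2 : MW G →* G := MonoidHom.mk'
    (fun w => cmm y x ^ Multiplicative.toAdd (eXW w) * cmm y (cstW w)) (by
    intro u v
    show cmm y x ^ Multiplicative.toAdd (eXW (u * v)) * cmm y (cstW (u * v)) = _ * _
    rw [show eXW (u * v) = eXW u * eXW v from map_mul _ _ _,
      show cstW (u * v) = cstW u * cstW v from map_mul _ _ _, toAdd_mul, zpow_add,
      cmm_mul_right hcen]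
    have hc : Commute (cmm y (cstW u)) (cmm y x ^ Multiplicative.toAdd (eXW v)) :=
      ((hcen y x (cmm y (cstW u))).zpow_left _).symm
    rw [mul_assoc, mul_assoc, ← mul_assoc (cmm y (cstW u)), hc.eq, mul_assoc])
  have h : f1 = f2 := by
    apply FreeGroup.ext_hom
    rintro (b | g)
    · cases b
      · show cmm y (Ew x y Yw) = cmm y x ^ Multiplicative.toAdd (eXW Yw) * cmm y (cstW Yw)
        simp [Ew, eXW, cstW, Yw]
      · show cmm y (Ew x y Xw) = cmm y x ^ Multiplicative.toAdd (eXW Xw) * cmm y (cstW Xw)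
        simp [Ew, eXW, cstW, Xw]
    · show cmm y (Ew x y _) = cmm y x ^ Multiplicative.toAdd (eXW _) * cmm y (cstW _)
      simp [Ew, eXW, cstW]
  exact DFunLike.congr_fun h w

end Central

end Aux
section Aux2

set_option linter.unusedSectionVars false

/-! ### Coordinates and word forms -/

/-- The three coordinates of a triple. -/
def coords (t : G × G × G) : Fin 3 → G := ![t.1, t.2.1, t.2.2]

@[simp] lemma coords_0 (t : G × G × G) : coords t 0 = t.1 := rfl
@[simp] lemma coords_1 (t : G × G × G) : coords t 1 = t.2.1 := rfl
@[simp] lemma coords_2 (t : G × G × G) : coords t 2 = t.2.2 := rfl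

/-- The coordinates of a generating triple, as marked words in the first two. -/
def cwW (G : Type*) [Group G] : Fin 3 → MW G := ![Xw, Yw, (Xw * Yw)⁻¹]

@[simp] lemma cwW_0 : cwW G 0 = Xw := rfl
@[simp] lemma cwW_1 : cwW G 1 = Yw := rfl
@[simp] lemma cwW_2 : cwW G 2 = (Xw * Yw)⁻¹ := rfl

@[simp] lemma fr3_0 : finRotate 3 0 = 1 := rfl
@[simp] lemma fr3_1 : finRotate 3 1 = 2 := rfl
@[simp] lemma fr3_2 : finRotate 3 2 = 0 := rfl
@[simp] lemma fr3i_0 : (finRotate 3)⁻¹ 0 = 2 := rfl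
@[simp] lemma fr3i_1 : (finRotate 3)⁻¹ 1 = 0 := rfl
@[simp] lemma fr3i_2 : (finRotate 3)⁻¹ 2 = 1 := rfl
@[simp] lemma sw01_0 : Equiv.swap (0 : Fin 3) 1 0 = 1 := by decide
@[simp] lemma sw01_1 : Equiv.swap (0 : Fin 3) 1 1 = 0 := by decide
@[simp] lemma sw01_2 : Equiv.swap (0 : Fin 3) 1 2 = 2 := by decide
@[simp] lemma sw02_0 : Equiv.swap (0 : Fin 3) 2 0 = 2 := by decide
@[simp] lemma sw02_1 : Equiv.swap (0 : Fin 3) 2 1 = 1 := by decide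
@[simp] lemma sw02_2 : Equiv.swap (0 : Fin 3) 2 2 = 0 := by decide
@[simp] lemma sw12_0 : Equiv.swap (1 : Fin 3) 2 0 = 0 := by decide
@[simp] lemma sw12_1 : Equiv.swap (1 : Fin 3) 2 1 = 2 := by decide
@[simp] lemma sw12_2 : Equiv.swap (1 : Fin 3) 2 2 = 1 := by decide

@[simp] lemma rotRaw_symm_apply (t : G × G × G) :
    rotRaw.symm t = (t.2.2, t.1, t.2.1) := rfl

lemma triple_third {x y z : G} (ht : (x, y, z) ∈ TripleSet G) : z = (x * y)⁻¹ :=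
  eq_inv_of_mul_eq_one_right ht.2

lemma coords_cw (t : TripleSet G) (j : Fin 3) :
    coords (t : G × G × G) j = Ew (t : G × G × G).1 (t : G × G × G).2.1 (cwW G j) := by
  obtain ⟨⟨x, y, z⟩, ht⟩ := t
  have hz : z = (x * y)⁻¹ := triple_third ht
  fin_cases j <;> simp [hz]

/-- Normal form for elements of `I(G)`: a coordinate pattern together with
conjugating marked words. -/
def WordForm (W : Subgroup (MW G)) (ρ : Equiv.Perm (TripleSet G)) : Prop :=
  ∃ (π : Equiv.Perm (Fin 3)) (w : Fin 3 → MW G), (∀ i, w i ∈ W) ∧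
    ∀ (t : TripleSet G) (i : Fin 3),
      coords ((ρ t : TripleSet G) : G × G × G) i =
        (Ew (t : G × G × G).1 (t : G × G × G).2.1 (w i))⁻¹ *
          coords (t : G × G × G) (π i) *
          Ew (t : G × G × G).1 (t : G × G × G).2.1 (w i)

lemma wf_one (W : Subgroup (MW G)) : WordForm W 1 := by
  refine ⟨1, fun _ => 1, fun _ => one_mem _, ?_⟩
  intro t i
  simp

lemma wf_mul {W : Subgroup (MW G)} (hX : Xw ∈ W) (hY : Yw ∈ W)
    (hsub : ∀ u v w : MW G, u ∈ W → v ∈ W → w ∈ W → substW u v w ∈ W)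
    {ρ ρ' : Equiv.Perm (TripleSet G)} (h : WordForm W ρ) (h' : WordForm W ρ') :
    WordForm W (ρ' * ρ) := by
  obtain ⟨π, w, hw, heq⟩ := h
  obtain ⟨π', w', hw', heq'⟩ := h'
  have hcw : ∀ j : Fin 3, cwW G j ∈ W := by
    intro j; fin_cases j
    · exact hX
    · exact hY
    · exact inv_mem (mul_mem hX hY)
  refine ⟨π * π',
    fun i => w (π' i) *
      substW ((w 0)⁻¹ * cwW G (π 0) * w 0) ((w 1)⁻¹ * cwW G (π 1) * w 1) (w' i),
    fun i => mul_mem (hw _) (hsub _ _ _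
      (mul_mem (mul_mem (inv_mem (hw 0)) (hcw _)) (hw 0))
      (mul_mem (mul_mem (inv_mem (hw 1)) (hcw _)) (hw 1)) (hw' i)), ?_⟩
  intro t i
  have key : ∀ j : Fin 3, coords ((ρ t : TripleSet G) : G × G × G) j
      = Ew (t : G × G × G).1 (t : G × G × G).2.1 ((w j)⁻¹ * cwW G (π j) * w j) := by
    intro j
    rw [heq t j, map_mul, map_mul, map_inv, coords_cw t (π j)]
  have k0 : ((ρ t : TripleSet G) : G × G × G).1
      = Ew (t : G × G × G).1 (t : G × G × G).2.1 ((w 0)⁻¹ * cwW G (π 0) * w 0) := by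
    have := key 0; simpa using this
  have k1 : ((ρ t : TripleSet G) : G × G × G).2.1
      = Ew (t : G × G × G).1 (t : G × G × G).2.1 ((w 1)⁻¹ * cwW G (π 1) * w 1) := by
    have := key 1; simpa using this
  have hmain := heq' (ρ t) i
  rw [heq t (π' i), k0, k1, ← Ew_subst] at hmain
  show coords ((ρ' (ρ t) : TripleSet G) : G × G × G) i = _
  rw [hmain, map_mul, mul_inv_rev, Equiv.Perm.mul_apply]
  group

lemma subtypePerm_inv_val {f : Equiv.Perm (G × G × G)}
    {hf : ∀ t, f t ∈ TripleSet G ↔ t ∈ TripleSet G} (t : TripleSet G) :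
    (((f.subtypePerm hf)⁻¹ t : TripleSet G) : G × G × G) = f.symm (t : G × G × G) := by
  have h : f ((((f.subtypePerm hf)⁻¹ t : TripleSet G)) : G × G × G) = (t : G × G × G) :=
    congrArg Subtype.val (Equiv.apply_symm_apply (f.subtypePerm hf) t)
  exact (Equiv.eq_symm_apply f).mpr h

section Generators

variable {W : Subgroup (MW G)} (hX : Xw ∈ W) (hY : Yw ∈ W)

lemma wf_sigma1 : WordForm W (sigma1T G) := by
  refine ⟨finRotate 3, fun _ => 1, fun _ => one_mem _, ?_⟩
  intro t i
  obtain ⟨⟨x, y, z⟩, ht⟩ := t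
  fin_cases i <;> simp [sigma1T]

lemma wf_sigma1_inv : WordForm W (sigma1T G)⁻¹ := by
  refine ⟨(finRotate 3)⁻¹, fun _ => 1, fun _ => one_mem _, ?_⟩
  intro t i
  rw [show (sigma1T G)⁻¹ t = (rotRaw.subtypePerm (fun t => (rotRaw_iff t).symm))⁻¹ t from rfl]
  have hv := subtypePerm_inv_val (f := rotRaw) (hf := fun t => (rotRaw_iff t).symm) t
  obtain ⟨⟨x, y, z⟩, ht⟩ := t
  fin_cases i <;> simp_all

include hY in
lemma wf_sigma3 : WordForm W (sigma3T G) := by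
  refine ⟨Equiv.swap 0 2, ![1, 1, Yw], ?_, ?_⟩
  · intro i; fin_cases i <;> simp [one_mem, hY]
  · intro t i
    obtain ⟨⟨x, y, z⟩, ht⟩ := t
    fin_cases i <;> simp [sigma3T, mul_assoc]

include hY in
lemma wf_sigma3_inv : WordForm W (sigma3T G)⁻¹ := by
  refine ⟨Equiv.swap 0 2, ![Yw⁻¹, 1, 1], ?_, ?_⟩
  · intro i; fin_cases i <;> simp [one_mem, inv_mem hY]
  · intro t i
    rw [show (sigma3T G)⁻¹ t = (sigma3Raw.subtypePerm (fun t => (sigma3Raw_iff t).symm))⁻¹ t from rfl]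
    have hv := subtypePerm_inv_val (f := sigma3Raw) (hf := fun t => (sigma3Raw_iff t).symm) t
    obtain ⟨⟨x, y, z⟩, ht⟩ := t
    fin_cases i <;> simp_all [mul_assoc]

include hX in
lemma wf_sigma4 : WordForm W (sigma4T G) := by
  refine ⟨Equiv.swap 0 1, ![1, 1, Xw], ?_, ?_⟩
  · intro i; fin_cases i <;> simp [one_mem, hX]
  · intro t i
    obtain ⟨⟨x, y, z⟩, ht⟩ := t
    fin_cases i <;> simp [sigma4T, mul_assoc]

include hY in
lemma wf_sigma4_inv : WordForm W (sigma4T G)⁻¹ := by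
  refine ⟨Equiv.swap 0 1, ![1, 1, Yw⁻¹], ?_, ?_⟩
  · intro i; fin_cases i <;> simp [one_mem, inv_mem hY]
  · intro t i
    rw [show (sigma4T G)⁻¹ t = (sigma4Raw.subtypePerm (fun t => (sigma4Raw_iff t).symm))⁻¹ t from rfl]
    have hv := subtypePerm_inv_val (f := sigma4Raw) (hf := fun t => (sigma4Raw_iff t).symm) t
    obtain ⟨⟨x, y, z⟩, ht⟩ := t
    fin_cases i <;> simp_all [mul_assoc]

include hX hY in
lemma wf_sigma5 : WordForm W (sigma5T G) := by
  refine ⟨Equiv.swap 1 2, ![1, 1, (Xw * Yw)⁻¹], ?_, ?_⟩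
  · intro i; fin_cases i <;> simp [one_mem, inv_mem, mul_mem, hX, hY]
  · intro t i
    have hz : ((t : G × G × G)).2.2 = ((t : G × G × G).1 * (t : G × G × G).2.1)⁻¹ := by
      obtain ⟨⟨x, y, z⟩, ht⟩ := t
      exact triple_third ht
    obtain ⟨⟨x, y, z⟩, ht⟩ := t
    simp only at hz
    fin_cases i <;> simp [sigma5T, hz, mul_assoc]

include hY in
lemma wf_sigma5_inv : WordForm W (sigma5T G)⁻¹ := by
  refine ⟨Equiv.swap 1 2, ![1, Yw⁻¹, 1], ?_, ?_⟩
  · intro i; fin_cases i <;> simp [one_mem, inv_mem hY]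
  · intro t i
    rw [show (sigma5T G)⁻¹ t = (sigma5Raw.subtypePerm (fun t => (sigma5Raw_iff t).symm))⁻¹ t from rfl]
    have hv := subtypePerm_inv_val (f := sigma5Raw) (hf := fun t => (sigma5Raw_iff t).symm) t
    obtain ⟨⟨x, y, z⟩, ht⟩ := t
    fin_cases i <;> simp_all [mul_assoc]

lemma wf_dInn (g : G) : WordForm (⊤ : Subgroup (MW G)) (dInnT g) := by
  refine ⟨1, fun _ => (FreeGroup.of (Sum.inr g))⁻¹, fun _ => Subgroup.mem_top _, ?_⟩
  intro t i
  obtain ⟨⟨x, y, z⟩, ht⟩ := t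
  fin_cases i <;> simp [dInnT, dAutT, mul_assoc]

lemma wf_dInn_inv (g : G) : WordForm (⊤ : Subgroup (MW G)) (dInnT g)⁻¹ := by
  refine ⟨1, fun _ => FreeGroup.of (Sum.inr g), fun _ => Subgroup.mem_top _, ?_⟩
  intro t i
  rw [show (dInnT g)⁻¹ t = ((autRaw (MulAut.conj g)).subtypePerm (fun t => (autRaw_iff _ t).symm))⁻¹ t from rfl]
  have hv := subtypePerm_inv_val (f := autRaw (MulAut.conj g)) (hf := fun t => (autRaw_iff _ t).symm) t
  rw [autRaw_symm_apply] at hv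
  obtain ⟨⟨x, y, z⟩, ht⟩ := t
  fin_cases i <;> simp_all [mul_assoc]

end Generators

/-- Every element of a subgroup generated by word-form permutations has word form. -/
lemma wf_closure {W : Subgroup (MW G)} (hX : Xw ∈ W) (hY : Yw ∈ W)
    (hsub : ∀ u v w : MW G, u ∈ W → v ∈ W → w ∈ W → substW u v w ∈ W)
    {S : Set (Equiv.Perm (TripleSet G))}
    (hS : ∀ ρ ∈ S, WordForm W ρ) (hSi : ∀ ρ ∈ S, WordForm W ρ⁻¹)
    {ρ : Equiv.Perm (TripleSet G)} (h : ρ ∈ Subgroup.closure S) : WordForm W ρ := by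
  have h' : ρ ∈ Submonoid.closure (S ∪ S⁻¹) := by
    rw [← Subgroup.closure_toSubmonoid]; exact h
  clear h
  induction h' using Submonoid.closure_induction with
  | mem ρ hρ =>
    rcases hρ with hρ | hρ
    · exact hS ρ hρ
    · have := hSi ρ⁻¹ (Set.mem_inv.mp hρ)
      rwa [inv_inv] at this
  | one => exact wf_one W
  | mul a b _ _ ha hb => exact wf_mul hX hY hsub hb ha

end Aux2
section Aux3

set_option linter.unusedSectionVars false

lemma gen_swap {x y : G} (h : Subgroup.closure {x, y} = ⊤) :
    Subgroup.closure ({y, x} : Set G) = ⊤ := by rwa [Set.pair_comm]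

lemma gen_right_mul {x y : G} (h : Subgroup.closure {x, y} = ⊤) :
    Subgroup.closure ({x, x * y} : Set G) = ⊤ := by
  refine closure_pair_top_of h (mem_cp_left _ _) ?_
  have hy : x⁻¹ * (x * y) ∈ Subgroup.closure ({x, x * y} : Set G) :=
    mul_mem (inv_mem (mem_cp_left _ _)) (mem_cp_right _ _)
  simpa using hy

lemma gen_mul_left {x y : G} (h : Subgroup.closure {x, y} = ⊤) :
    Subgroup.closure ({x * y, y} : Set G) = ⊤ := by
  refine closure_pair_top_of h ?_ (mem_cp_right _ _)
  have hx : (x * y) * y⁻¹ ∈ Subgroup.closure ({x * y, y} : Set G) :=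
    mul_mem (mem_cp_left _ _) (inv_mem (mem_cp_right _ _))
  simpa using hx

lemma ab_nontriv (hcl2 : Subgroup.lowerCentralSeries (⊤ : Subgroup G) 2 = ⊥ ∧ Subgroup.lowerCentralSeries (⊤ : Subgroup G) 1 ≠ ⊥)
    {x y : G} (h : Subgroup.closure {x, y} = ⊤)
    (hx : Abelianization.of x = 1) (hy : Abelianization.of y = 1) : False := by
  have hx' : x ∈ commutator G := (QuotientGroup.eq_one_iff x).mp hx
  have hy' : y ∈ commutator G := (QuotientGroup.eq_one_iff y).mp hy
  have htop : commutator G = ⊤ := by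
    rw [eq_top_iff, ← h, Subgroup.closure_le]
    rintro g hg
    simp only [Set.mem_insert_iff, Set.mem_singleton_iff] at hg
    rcases hg with rfl | rfl
    · exact hx'
    · exact hy'
  have h1 : Subgroup.lowerCentralSeries (⊤ : Subgroup G) 1 = ⊤ := by
    rw [top_lowerCentralSeries_one, htop]
  have h2 : Subgroup.lowerCentralSeries (⊤ : Subgroup G) 2 = ⊤ := by
    show ⁅Subgroup.lowerCentralSeries (⊤ : Subgroup G) 1, (⊤ : Subgroup G)⁆ = ⊤
    rw [h1, ← _root_.commutator_def, htop]
  exact hcl2.2 (by rw [h1, ← h2, hcl2.1])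

lemma pattern_kill (hcl2 : Subgroup.lowerCentralSeries (⊤ : Subgroup G) 2 = ⊥ ∧ Subgroup.lowerCentralSeries (⊤ : Subgroup G) 1 ≠ ⊥)
    (α : MulAut G) (π : Equiv.Perm (Fin 3)) (w0 w1 : MW G)
    (H0 : ∀ u v : G, Subgroup.closure {u, v} = ⊤ →
      α u = (Ew u v w0)⁻¹ * coords (u, v, (u * v)⁻¹) (π 0) * Ew u v w0)
    (H1 : ∀ u v : G, Subgroup.closure {u, v} = ⊤ →
      α v = (Ew u v w1)⁻¹ * coords (u, v, (u * v)⁻¹) (π 1) * Ew u v w1)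
    (hex : ∃ x y : G, Subgroup.closure {x, y} = ⊤) :
    π 0 = 0 ∧ π 1 = 1 := by
  obtain ⟨x, y, hxy⟩ := hex
  set q := (Abelianization.of : G →* Abelianization G) with hqdef
  have hq : ∀ e c : G, q (e⁻¹ * c * e) = q c := by
    intro e c
    rw [map_mul, map_mul, map_inv, mul_comm ((q e)⁻¹) (q c), mul_assoc, inv_mul_cancel, mul_one]
  have QA : ∀ u v : G, Subgroup.closure {u, v} = ⊤ →
      q (α u) = q (coords (u, v, (u * v)⁻¹) (π 0)) := by
    intro u v h; rw [H0 u v h, hq]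
  have QB : ∀ u v : G, Subgroup.closure {u, v} = ⊤ →
      q (α v) = q (coords (u, v, (u * v)⁻¹) (π 1)) := by
    intro u v h; rw [H1 u v h, hq]
  have d3 : ∀ i : Fin 3, i = 0 ∨ i = 1 ∨ i = 2 := by decide
  have done : (∀ u v : G, Subgroup.closure {u, v} = ⊤ → q u = 1) → False := by
    intro hall
    exact ab_nontriv hcl2 hxy (hall x y hxy) (hall y x (gen_swap hxy))
  rcases d3 (π 0) with hp0 | hp0 | hp0
  · rcases d3 (π 1) with hp1 | hp1 | hp1
    · exact absurd (π.injective (hp0.trans hp1.symm)) (by decide)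
    · exact ⟨hp0, hp1⟩
    · exfalso
      have QA' : ∀ u v : G, Subgroup.closure {u, v} = ⊤ → q (α u) = q u := by
        intro u v h
        have h' := QA u v h; rwa [hp0, coords_0] at h'
      have R : ∀ u v : G, Subgroup.closure {u, v} = ⊤ → q v = (q u * q v)⁻¹ := by
        intro u v h
        have h1 := QB u v h
        rw [hp1, coords_2, map_inv, map_mul] at h1
        have h2 := QA' v u (gen_swap h)
        exact h2.symm.trans h1
      apply done; intro u v h
      have e1 : q v * (q u * q v) = 1 := by
        nth_rewrite 1 [R u v h]; exact inv_mul_cancel _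
      have e2 : q u * (q v * q u) = 1 := by
        nth_rewrite 1 [R v u (gen_swap h)]; exact inv_mul_cancel _
      have r3 := R u (u * v) (gen_right_mul h)
      rw [map_mul] at r3
      have e3 : (q u * q v) * (q u * (q u * q v)) = 1 := by
        nth_rewrite 1 [r3]; exact inv_mul_cancel _
      have hBA : q v = q u := by
        have h12 : (q u * q v) * q v = (q u * q v) * q u := by
          rw [mul_comm (q u * q v) (q v), mul_comm (q u * q v) (q u)]
          rw [e1]
          rw [show q u * (q u * q v) = q u * (q v * q u) by rw [mul_comm (q u) (q v)]]
          rw [e2]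
        exact mul_left_cancel h12
      rw [hBA] at e1 e3
      rw [e1, mul_one] at e3
      rw [e3, mul_one] at e1
      exact e1
  · exfalso; apply done; intro u v h
    have e1 := QA u v h; rw [hp0, coords_1] at e1
    have e2 := QA u (u * v) (gen_right_mul h); rw [hp0, coords_1] at e2
    rw [map_mul] at e2
    exact right_eq_mul.mp (e1.symm.trans e2)
  · exfalso; apply done; intro u v h
    have e1 := QA u v h; rw [hp0, coords_2] at e1
    have e2 := QA u (u * v) (gen_right_mul h); rw [hp0, coords_2] at e2
    rw [map_inv, map_mul] at e1
    rw [map_inv, map_mul, map_mul] at e2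
    have h4 := inv_injective (e1.symm.trans e2)
    exact right_eq_mul.mp (mul_left_cancel h4)

lemma trivial_pattern (hcen : ∀ a b c : G, Commute (cmm a b) c) (α : MulAut G) (w0 w1 : MW G)
    (H0 : ∀ u v : G, Subgroup.closure {u, v} = ⊤ → α u = (Ew u v w0)⁻¹ * u * Ew u v w0)
    (H1 : ∀ u v : G, Subgroup.closure {u, v} = ⊤ → α v = (Ew u v w1)⁻¹ * v * Ew u v w1) :
    ∀ u v : G, Subgroup.closure {u, v} = ⊤ →
      α u = (cstW w0)⁻¹ * u * cstW w0 ∧ α v = (cstW w0)⁻¹ * v * cstW w0 := by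
  have A0 : ∀ u v : G, Subgroup.closure {u, v} = ⊤ →
      α u = u * (cmm u v ^ Multiplicative.toAdd (eYW w0) * cmm u (cstW w0)) := by
    intro u v h
    rw [H0 u v h, conj_eq_cmm, cmm_Ew_snd hcen]
  have A1 : ∀ u v : G, Subgroup.closure {u, v} = ⊤ →
      α v = v * (cmm v u ^ Multiplicative.toAdd (eXW w1) * cmm v (cstW w1)) := by
    intro u v h
    rw [H1 u v h, conj_eq_cmm, cmm_Ew_fst hcen]
  have star : ∀ u v : G, Subgroup.closure {u, v} = ⊤ →
      cmm v u ^ Multiplicative.toAdd (eXW w1) * cmm v (cstW w1) = cmm v (cstW w0) := by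
    intro u v h
    have h2 := gen_mul_left h
    have lhs := A0 (u * v) v h2
    rw [cmm_mul_left hcen, cmm_self, mul_one, cmm_mul_left hcen u v (cstW w0)] at lhs
    have hXc : ∀ c : G,
        Commute (cmm u v ^ Multiplicative.toAdd (eYW w0) * cmm u (cstW w0)) c := fun c =>
      ((hcen u v c).zpow_left _).mul_left (hcen u (cstW w0) c)
    have hrhs : α (u * v) = (u * v) *
        ((cmm u v ^ Multiplicative.toAdd (eYW w0) * cmm u (cstW w0)) *
          (cmm v u ^ Multiplicative.toAdd (eXW w1) * cmm v (cstW w1))) := by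
      rw [map_mul, A0 u v h, A1 u v h]
      calc u * (cmm u v ^ Multiplicative.toAdd (eYW w0) * cmm u (cstW w0)) *
            (v * (cmm v u ^ Multiplicative.toAdd (eXW w1) * cmm v (cstW w1)))
          = u * ((cmm u v ^ Multiplicative.toAdd (eYW w0) * cmm u (cstW w0)) * v) *
            (cmm v u ^ Multiplicative.toAdd (eXW w1) * cmm v (cstW w1)) := by group
        _ = u * (v * (cmm u v ^ Multiplicative.toAdd (eYW w0) * cmm u (cstW w0))) *
            (cmm v u ^ Multiplicative.toAdd (eXW w1) * cmm v (cstW w1)) := by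
              rw [(hXc v).eq]
        _ = (u * v) * ((cmm u v ^ Multiplicative.toAdd (eYW w0) * cmm u (cstW w0)) *
            (cmm v u ^ Multiplicative.toAdd (eXW w1) * cmm v (cstW w1))) := by group
    have hmm := lhs.symm.trans hrhs
    have h3 := mul_left_cancel hmm
    rw [← mul_assoc] at h3
    exact (mul_left_cancel h3).symm
  intro u v h
  constructor
  · have hA := A1 v u (gen_swap h)
    rw [star v u (gen_swap h)] at hA
    rw [conj_eq_cmm]
    exact hA
  · have hA := A1 u v h
    rw [star u v h] at hA
    rw [conj_eq_cmm]
    exact hA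

lemma aut_conj_ext (α : MulAut G) {x y c : G} (h : Subgroup.closure {x, y} = ⊤)
    (hx : α x = c⁻¹ * x * c) (hy : α y = c⁻¹ * y * c) (u : G) : α u = c⁻¹ * u * c := by
  have hu : u ∈ Subgroup.closure ({x, y} : Set G) := by rw [h]; exact Subgroup.mem_top u
  induction hu using Subgroup.closure_induction with
  | mem a ha =>
    simp only [Set.mem_insert_iff, Set.mem_singleton_iff] at ha
    rcases ha with rfl | rfl
    · exact hx
    · exact hy
  | one => simp
  | mul a b _ _ ha hb => rw [map_mul, ha, hb]; group
  | inv a _ ha => rw [map_inv, ha]; group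

lemma main_core (hcl2 : Subgroup.lowerCentralSeries (⊤ : Subgroup G) 2 = ⊥ ∧ Subgroup.lowerCentralSeries (⊤ : Subgroup G) 1 ≠ ⊥)
    (hex : ∃ x y : G, Subgroup.closure {x, y} = ⊤)
    (α : MulAut G) {W : Subgroup (MW G)} (hWF : WordForm W (dAutT α)) :
    ∃ w0 ∈ W, ∀ u : G, α u = (cstW w0)⁻¹ * u * cstW w0 := by
  obtain ⟨π, w, hw, heq⟩ := hWF
  have mkT : ∀ u v : G, Subgroup.closure {u, v} = ⊤ → ((u, v, (u * v)⁻¹) ∈ TripleSet G) :=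
    fun u v h => ⟨h, mul_inv_cancel _⟩
  have H0 : ∀ u v : G, Subgroup.closure {u, v} = ⊤ →
      α u = (Ew u v (w 0))⁻¹ * coords (u, v, (u * v)⁻¹) (π 0) * Ew u v (w 0) := by
    intro u v h
    have h' := heq ⟨(u, v, (u * v)⁻¹), mkT u v h⟩ 0
    simpa [dAutT] using h'
  have H1 : ∀ u v : G, Subgroup.closure {u, v} = ⊤ →
      α v = (Ew u v (w 1))⁻¹ * coords (u, v, (u * v)⁻¹) (π 1) * Ew u v (w 1) := by
    intro u v h
    have h' := heq ⟨(u, v, (u * v)⁻¹), mkT u v h⟩ 1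
    simpa [dAutT] using h'
  obtain ⟨hp0, hp1⟩ := pattern_kill hcl2 α π (w 0) (w 1) H0 H1 hex
  rw [hp0] at H0; rw [hp1] at H1
  simp only [coords_0] at H0
  simp only [coords_1] at H1
  have tp := trivial_pattern (fun a b c => cmm_central hcl2.1 a b c) α (w 0) (w 1) H0 H1
  obtain ⟨x, y, hxy⟩ := hex
  exact ⟨w 0, hw 0, aut_conj_ext α hxy (tp x y hxy).1 (tp x y hxy).2⟩

end Aux3
section Aux4

set_option linter.unusedSectionVars false

lemma dAutT_congr {α β : MulAut G} (h : ∀ u, α u = β u) : dAutT α = dAutT β := by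
  apply Equiv.ext; intro t; apply Subtype.ext
  show autRaw α (t : G × G × G) = autRaw β (t : G × G × G)
  rw [autRaw_apply, autRaw_apply, h, h, h]

lemma dAutT_eq_one {α : MulAut G} (h : ∀ u, α u = u) : dAutT α = 1 := by
  apply Equiv.ext; intro t; apply Subtype.ext
  show autRaw α (t : G × G × G) = (t : G × G × G)
  rw [autRaw_apply, h, h, h]

lemma dInnT_one : dInnT (1 : G) = 1 :=
  dAutT_eq_one (by intro u; simp)

/-- Constant-free marked words. -/
def W0 (G : Type*) [Group G] : Subgroup (MW G) := Subgroup.closure {Xw, Yw}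

lemma W0_X : Xw ∈ W0 G := Subgroup.subset_closure (Set.mem_insert _ _)

lemma W0_Y : Yw ∈ W0 G := Subgroup.subset_closure (Set.mem_insert_of_mem _ rfl)

@[simp] lemma substW_X (u v : MW G) : substW u v Xw = u := by simp [substW, Xw]
@[simp] lemma substW_Y (u v : MW G) : substW u v Yw = v := by simp [substW, Yw]
@[simp] lemma cstW_X : cstW (Xw : MW G) = 1 := by simp [cstW, Xw]
@[simp] lemma cstW_Y : cstW (Yw : MW G) = 1 := by simp [cstW, Yw]

lemma W0_subst {u v w : MW G} (hu : u ∈ W0 G) (hv : v ∈ W0 G) (hw : w ∈ W0 G) :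
    substW u v w ∈ W0 G := by
  induction hw using Subgroup.closure_induction with
  | mem a ha =>
    simp only [Set.mem_insert_iff, Set.mem_singleton_iff] at ha
    rcases ha with rfl | rfl
    · simpa using hu
    · simpa using hv
  | one => rw [map_one]; exact one_mem _
  | mul a b _ _ ha hb => rw [map_mul]; exact mul_mem ha hb
  | inv a _ ha => rw [map_inv]; exact inv_mem ha

lemma W0_cst {w : MW G} (hw : w ∈ W0 G) : cstW w = 1 := by
  induction hw using Subgroup.closure_induction with
  | mem a ha =>
    simp only [Set.mem_insert_iff, Set.mem_singleton_iff] at ha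
    rcases ha with rfl | rfl <;> simp
  | one => exact map_one _
  | mul a b _ _ ha hb => rw [map_mul, ha, hb, one_mul]
  | inv a _ ha => rw [map_inv, ha, inv_one]

lemma wf_of_SS14 {ρ : Equiv.Perm (TripleSet G)} (h : ρ ∈ SS14 G) : WordForm (W0 G) ρ := by
  refine wf_closure W0_X W0_Y (fun u v w hu hv hw => W0_subst hu hv hw) ?_ ?_ h
  · intro ρ' hρ'
    simp only [Set.mem_insert_iff, Set.mem_singleton_iff] at hρ'
    rcases hρ' with rfl | rfl
    · exact wf_sigma1
    · exact wf_sigma4 W0_X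
  · intro ρ' hρ'
    simp only [Set.mem_insert_iff, Set.mem_singleton_iff] at hρ'
    rcases hρ' with rfl | rfl
    · exact wf_sigma1_inv
    · exact wf_sigma4_inv W0_Y

lemma wf_of_IGroup {ρ : Equiv.Perm (TripleSet G)} (h : ρ ∈ IGroup G) :
    WordForm (⊤ : Subgroup (MW G)) ρ := by
  have hX : (Xw : MW G) ∈ (⊤ : Subgroup (MW G)) := Subgroup.mem_top _
  have hY : (Yw : MW G) ∈ (⊤ : Subgroup (MW G)) := Subgroup.mem_top _
  have hsub : ∀ u v w : MW G, u ∈ (⊤ : Subgroup (MW G)) → v ∈ (⊤ : Subgroup (MW G)) →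
      w ∈ (⊤ : Subgroup (MW G)) → substW u v w ∈ (⊤ : Subgroup (MW G)) :=
    fun _ _ _ _ _ _ => Subgroup.mem_top _
  refine wf_closure hX hY hsub ?_ ?_ h
  · rintro ρ' (⟨g, rfl⟩ | hρ')
    · exact wf_dInn g
    · simp only [Set.mem_insert_iff, Set.mem_singleton_iff] at hρ'
      rcases hρ' with rfl | rfl | rfl | rfl | rfl
      · exact wf_sigma1
      · show WordForm ⊤ (sigma1T G * sigma1T G)
        exact wf_mul hX hY hsub wf_sigma1 wf_sigma1
      · exact wf_sigma3 hY
      · exact wf_sigma4 hX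
      · exact wf_sigma5 hX hY
  · rintro ρ' (⟨g, rfl⟩ | hρ')
    · exact wf_dInn_inv g
    · simp only [Set.mem_insert_iff, Set.mem_singleton_iff] at hρ'
      rcases hρ' with rfl | rfl | rfl | rfl | rfl
      · exact wf_sigma1_inv
      · show WordForm ⊤ ((sigma1T G * sigma1T G)⁻¹)
        rw [mul_inv_rev]
        exact wf_mul hX hY hsub wf_sigma1_inv wf_sigma1_inv
      · exact wf_sigma3_inv hY
      · exact wf_sigma4_inv hY
      · exact wf_sigma5_inv hY

end Aux4

section Statements

theorem statement15 (p : ℕ) (hp : p.Prime) (G : Type*) [Group G] [Finite G]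
    (hpG : IsPGroup p G) (hB : IsBeauvilleGroup G)
    (hcl2 : Subgroup.lowerCentralSeries (⊤ : Subgroup G) 2 = ⊥ ∧ Subgroup.lowerCentralSeries (⊤ : Subgroup G) 1 ≠ ⊥) :
    (Set.range (dInnT (G := G)) ∩ (SS14 G : Set (Equiv.Perm (TripleSet G))) = {1}) ∧
    (((IGroup G).prod (IGroup G) :
        Set (Equiv.Perm (TripleSet G) × Equiv.Perm (TripleSet G))) ∩
      {q | ∃ α : MulAut G, q = (dAutT α, dAutT α)} =
      {q | ∃ g : G, q = (dInnT g, dInnT g)}) := by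
  have hex : ∃ x y : G, Subgroup.closure {x, y} = ⊤ := by
    obtain ⟨t, x1, y1, x2, y2, -, h1, -, -⟩ := hB
    exact ⟨x1, y1, h1⟩
  constructor
  · ext ρ
    simp only [Set.mem_inter_iff, Set.mem_singleton_iff]
    constructor
    · rintro ⟨⟨g, rfl⟩, hss⟩
      have hWF : WordForm (W0 G) (dAutT (MulAut.conj g)) :=
        wf_of_SS14 (SetLike.mem_coe.mp hss)
      obtain ⟨w0, hw0, hcj⟩ := main_core hcl2 hex (MulAut.conj g) hWF
      rw [W0_cst hw0] at hcj
      refine dAutT_eq_one ?_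
      intro u
      have := hcj u
      simpa using this
    · rintro rfl
      exact ⟨⟨1, dInnT_one⟩, SetLike.mem_coe.mpr (one_mem _)⟩
  · ext ρq
    simp only [Set.mem_inter_iff, Set.mem_setOf_eq]
    constructor
    · rintro ⟨hmem, α, rfl⟩
      have hI : dAutT α ∈ IGroup G :=
        (Subgroup.mem_prod.mp (SetLike.mem_coe.mp hmem)).1
      obtain ⟨w0, -, hcj⟩ := main_core hcl2 hex α (wf_of_IGroup hI)
      refine ⟨(cstW w0)⁻¹, ?_⟩
      have hαc : ∀ u, α u = MulAut.conj (cstW w0)⁻¹ u := by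
        intro u
        rw [hcj u]
        simp [mul_assoc]
      have hh : dAutT α = dAutT (MulAut.conj (cstW w0)⁻¹) := dAutT_congr hαc
      rw [hh]
      rfl
    · rintro ⟨g, rfl⟩
      have hin : dInnT g ∈ IGroup G :=
        Subgroup.subset_closure (Set.mem_union_left _ ⟨g, rfl⟩)
      exact ⟨SetLike.mem_coe.mpr (Subgroup.mem_prod.mpr ⟨hin, hin⟩), ⟨MulAut.conj g, rfl⟩⟩

end Statements

end Beauville
end
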